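/- arXiv:2010.14536 — 3 statements merged into one kernel-verified Lean document; each statement's English description precedes it below -/
import Mathlib

section
/- Let p be a prime and a ∈ ℤ with gcd(a,p) = 1. Then S(p,a) = p² S_k(p,a) + O(p²); in particular S(p,a) ≪ p^{5/2} (implicit constants depending at most on k). -/
open scoped Real Classical
open Finset MeasureTheory

noncomputable section

/-- `e x = exp(2πix)`. -/
def e (x : ℝ) : ℂ := Complex.exp (2 * (Real.pi : ℂ) * Complex.I * (x : ℂ))

/-- `T x = x₁³ + x₂³ + x₃³` for triples of naturals. -/
def Tn (x : Fin 3 → ℕ) : ℕ := x 0 ^ 3 + x 1 ^ 3 + x 2 ^ 3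

/-- `T x = x₁³ + x₂³ + x₃³` for triples of reals. -/
def Tr (x : Fin 3 → ℝ) : ℝ := x 0 ^ 3 + x 1 ^ 3 + x 2 ^ 3

/-- The set `𝒞` of positive integers that are sums of three positive integral cubes. -/
def SumThreeCubes : Set ℕ := {m | ∃ x : Fin 3 → ℕ, (∀ i, 1 ≤ x i) ∧ Tn x = m}

/-- `P = n^{1/(3k)}`. -/
def PP (k n : ℕ) : ℝ := (n : ℝ) ^ ((1 : ℝ) / (3 * k))

/-- `r₃(m)`: number of representations of `m` as `T x` with `1 ≤ xᵢ ≤ P`. -/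
def r3 (k n m : ℕ) : ℕ :=
  Nat.card {x : Fin 3 → ℕ // (∀ i, 1 ≤ x i ∧ (x i : ℝ) ≤ PP k n) ∧ Tn x = m}

/-- `m ∈ 𝒜(X,R)`: `1 ≤ m ≤ X` and every prime factor of `m` is at most `R`. -/
def SmoothIn (X R : ℝ) (m : ℕ) : Prop :=
  1 ≤ m ∧ (m : ℝ) ≤ X ∧ ∀ p : ℕ, p.Prime → p ∣ m → (p : ℝ) ≤ R

/-- Membership in `𝒞(P)`: triples `x` with `1 ≤ xᵢ ≤ P` and `x₀, x₁ ∈ 𝒜(P, P^η)`. -/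
def InCP (k n : ℕ) (η : ℝ) (x : Fin 3 → ℕ) : Prop :=
  (∀ i, 1 ≤ x i ∧ (x i : ℝ) ≤ PP k n) ∧
    SmoothIn (PP k n) (PP k n ^ η) (x 0) ∧ SmoothIn (PP k n) (PP k n ^ η) (x 1)

/-- `s₃(m)`: number of representations of `m` as `T x` with `x ∈ 𝒞(P)`. -/
def s3 (k n : ℕ) (η : ℝ) (m : ℕ) : ℕ :=
  Nat.card {x : Fin 3 → ℕ // InCP k n η x ∧ Tn x = m}

/-- `R(n)`: representations of `n` as sums of `s` `k`-th powers of sums of three cubes,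
counted with the multiplicities `r₃`. -/
def RR (k s n : ℕ) : ℝ :=
  ∑' X : {X : Fin s → ℕ // (∀ i, X i ∈ SumThreeCubes) ∧ ∑ i, X i ^ k = n},
    ∏ i, (r3 k n (X.1 i) : ℝ)

/-- `R_η(n)`: as `R(n)` but with the multiplicities `s₃`. -/
def Reta (k s n : ℕ) (η : ℝ) : ℝ :=
  ∑' X : {X : Fin s → ℕ // (∀ i, X i ∈ SumThreeCubes) ∧ ∑ i, X i ^ k = n},
    ∏ i, (s3 k n η (X.1 i) : ℝ)

/-- `r(n)`: representations of `n` as sums of `s` `k`-th powers of elements of `𝒞`,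
counted without multiplicities. -/
def rcount (k s n : ℕ) : ℕ :=
  Nat.card {X : Fin s → ℕ // (∀ i, X i ∈ SumThreeCubes) ∧ ∑ i, X i ^ k = n}

/-- The complete exponential sum `S(q,a) = Σ_{1 ≤ r ≤ q} e_q(a T(r)^k)`. -/
def Sqa (k q : ℕ) (a : ℤ) : ℂ :=
  ∑ r ∈ Fintype.piFinset (fun _ : Fin 3 => Finset.Icc 1 q),
    e (((a * (Tn r : ℤ) ^ k : ℤ) : ℝ) / q)

/-- `S_k(q,a) = Σ_{r=1}^{q} e_q(a r^k)`. -/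
def Ska (k q : ℕ) (a : ℤ) : ℂ :=
  ∑ r ∈ Finset.Icc 1 q, e (((a * (r : ℤ) ^ k : ℤ) : ℝ) / q)

/-- `S_n(q) = Σ_{a=1,(a,q)=1}^{q} (q^{-3} S(q,a))^s e_q(-na)`. -/
def Snq (k s n q : ℕ) : ℂ :=
  ∑ a ∈ (Finset.Icc 1 q).filter (fun a => Nat.gcd a q = 1),
    (((q : ℂ) ^ 3)⁻¹ * Sqa k q (a : ℤ)) ^ s * e (-(((a * n : ℕ) : ℝ) / q))

/-- `S_s^*(q) = Σ_{a=1,(a,q)=1}^{q} |q^{-3} S(q,a)|^s`. -/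
def Ssstar (k s q : ℕ) : ℝ :=
  ∑ a ∈ (Finset.Icc 1 q).filter (fun a => Nat.gcd a q = 1),
    ‖((q : ℂ) ^ 3)⁻¹ * Sqa k q (a : ℤ)‖ ^ s

/-- The singular series `𝔖(n) = Σ_{q ≥ 1} S_n(q)`. -/
def SingSeries (k s n : ℕ) : ℂ := ∑' q : ℕ, Snq k s n (q + 1)

/-- The Weyl sum `f(α) = Σ_{1 ≤ x ≤ P} e(α T(x)^k)`. -/
def fexp (k n : ℕ) (α : ℝ) : ℂ :=
  ∑ x ∈ Fintype.piFinset (fun _ : Fin 3 => Finset.Icc 1 ⌊PP k n⌋₊),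
    e (α * ((Tn x : ℝ)) ^ k)

/-- The smooth Weyl sum `g(α) = Σ_{x ∈ 𝒞(P)} e(α T(x)^k)`. -/
def gexp (k n : ℕ) (η : ℝ) (α : ℝ) : ℂ :=
  ∑ x ∈ (Fintype.piFinset (fun _ : Fin 3 => Finset.Icc 1 ⌊PP k n⌋₊)).filter
      (fun x => InCP k n η x),
    e (α * ((Tn x : ℝ)) ^ k)

/-- The major arcs `𝔐` of level `P^ξ`. -/
def majorArcs (k n : ℕ) (ξ : ℝ) : Set ℝ :=
  ⋃ q : ℕ, ⋃ a : ℕ,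
    ⋃ (_ : 1 ≤ q ∧ a ≤ q ∧ (q : ℝ) ≤ PP k n ^ ξ ∧ Nat.gcd a q = 1),
      {α ∈ Set.Ico (0 : ℝ) 1 | |α - (a : ℝ) / q| ≤ PP k n ^ ξ / ((q : ℝ) * n)}

/-- The minor arcs `𝔪 = [0,1) ∖ 𝔐`. -/
def minorArcs (k n : ℕ) (ξ : ℝ) : Set ℝ := Set.Ico (0 : ℝ) 1 \ majorArcs k n ξ

/-- The major arcs `𝔑` (with `κ = 1/5`). -/
def majorArcsN (k n : ℕ) : Set ℝ :=
  ⋃ q : ℕ, ⋃ a : ℕ,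
    ⋃ (_ : 1 ≤ q ∧ a ≤ q ∧ (q : ℝ) ≤ Real.log (PP k n) ^ ((1 : ℝ) / 5) ∧ Nat.gcd a q = 1),
      {α ∈ Set.Ico (0 : ℝ) 1 |
        |α - (a : ℝ) / q| ≤ Real.log (PP k n) ^ ((1 : ℝ) / 5) / ((q : ℝ) * PP k n ^ (3 * k))}

/-- The minor arcs `𝔫 = [0,1) ∖ 𝔑`. -/
def minorArcsN (k n : ℕ) : Set ℝ := Set.Ico (0 : ℝ) 1 \ majorArcsN k n

/-- `v(β) = ∫_{[0,P]³} e(β T(x)^k) dx`. -/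
def vint (k n : ℕ) (β : ℝ) : ℂ :=
  ∫ x in Set.univ.pi (fun _ : Fin 3 => Set.Icc (0 : ℝ) (PP k n)), e (β * Tr x ^ k)

/-- The constant `Γ(4/3)^{3s} Γ(1+1/k)^s Γ(s/k)^{-1}`. -/
def MainC (k s : ℕ) : ℝ :=
  Real.Gamma (4 / 3) ^ (3 * s) * Real.Gamma (1 + 1 / k) ^ s * (Real.Gamma ((s : ℝ) / k))⁻¹

/-- The defining properties of Dickman's function `ρ`. -/
def IsDickman (ρ : ℝ → ℝ) : Prop :=
  (∀ x : ℝ, x < 0 → ρ x = 0) ∧ (∀ x : ℝ, 0 ≤ x → x ≤ 1 → ρ x = 1) ∧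
    ContinuousOn ρ (Set.Ioi (0 : ℝ)) ∧ (∀ x : ℝ, 1 < x → DifferentiableAt ℝ ρ x) ∧
    (∀ x : ℝ, 1 < x → x * deriv ρ x = -ρ (x - 1))

/-- `A_r(m)`: the number of `P^η`-smooth numbers `x ≤ m` with `x ≡ r (mod q)`. -/
def Acount (P η : ℝ) (q r m : ℕ) : ℕ :=
  Nat.card {x : ℕ // 1 ≤ x ∧ x ≤ m ∧ (∀ p : ℕ, p.Prime → p ∣ x → (p : ℝ) ≤ P ^ η) ∧
    x % q = r}

/-- The Vinogradov exponential sum `f_k(α; X) = Σ_{1 ≤ x ≤ X} e(α₁ x + ⋯ + α_k x^k)`. -/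
def fkV (k : ℕ) (α : Fin k → ℝ) (X : ℝ) : ℂ :=
  ∑ x ∈ Finset.Icc 1 ⌊X⌋₊, e (∑ j : Fin k, α j * (x : ℝ) ^ ((j : ℕ) + 1))

/-- `ℳ_{3,3}(q)` (for `q = p^h`): residues of the form `x₁³+x₂³+x₃³` with `p ∤ x₁`. -/
def M33 (q p : ℕ) : Set (ZMod q) :=
  {y | ∃ x : Fin 3 → ℤ, ¬ (p : ℤ) ∣ x 0 ∧ ((x 0 ^ 3 + x 1 ^ 3 + x 2 ^ 3 : ℤ) : ZMod q) = y}

/-- `M_n(p^h)`: solutions of `Σ T(yᵢ)^k ≡ n (mod p^h)` with `1 ≤ yᵢⱼ ≤ p^h`. -/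
def Mn (k s p h n : ℕ) : ℕ :=
  Nat.card {Y : Fin s → Fin 3 → ℕ // (∀ i j, 1 ≤ Y i j ∧ Y i j ≤ p ^ h) ∧
    (∑ i, Tn (Y i) ^ k) ≡ n [MOD p ^ h]}

/-- `M_n^*(p^h)`: as `M_n(p^h)`, with additionally `p ∤ y₁,₁` and `p ∤ T(y₁)`. -/
def MnStar (k s p h n : ℕ) [NeZero s] : ℕ :=
  Nat.card {Y : Fin s → Fin 3 → ℕ // (∀ i j, 1 ≤ Y i j ∧ Y i j ≤ p ^ h) ∧
    (∑ i, Tn (Y i) ^ k) ≡ n [MOD p ^ h] ∧ ¬ p ∣ Y 0 0 ∧ ¬ p ∣ Tn (Y 0)}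


section Statement6Proof

open Complex

namespace St6
variable {p : ℕ} [Fact p.Prime]

lemma norm_psi (x : ZMod p) : ‖ZMod.stdAddChar x‖ = 1 := by
  rw [ZMod.stdAddChar_apply, Circle.norm_coe]

lemma card_pow_le (m : ℕ) (hm : m ≠ 0) (w : ZMod p) :
    ((univ : Finset (ZMod p)).filter (fun x => x ^ m = w)).card ≤ m := by
  classical
  have hm' : 0 < m := Nat.pos_of_ne_zero hm
  have hpoly : (Polynomial.X ^ m - Polynomial.C w : Polynomial (ZMod p)) ≠ 0 :=
    Polynomial.X_pow_sub_C_ne_zero hm' w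
  have hsub : ((univ : Finset (ZMod p)).filter (fun x => x ^ m = w)) ⊆
      (Polynomial.X ^ m - Polynomial.C w : Polynomial (ZMod p)).roots.toFinset := by
    intro x hx
    rw [mem_filter] at hx
    rw [Multiset.mem_toFinset, Polynomial.mem_roots hpoly]
    simp [Polynomial.IsRoot, sub_eq_zero, hx.2]
  calc ((univ : Finset (ZMod p)).filter (fun x => x ^ m = w)).card
      ≤ (Polynomial.X ^ m - Polynomial.C w : Polynomial (ZMod p)).roots.toFinset.card :=
        Finset.card_le_card hsub
    _ ≤ Multiset.card (Polynomial.X ^ m - Polynomial.C w : Polynomial (ZMod p)).roots :=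
        Multiset.toFinset_card_le _
    _ ≤ (Polynomial.X ^ m - Polynomial.C w : Polynomial (ZMod p)).natDegree :=
        Polynomial.card_roots' _
    _ = m := by rw [Polynomial.natDegree_X_pow_sub_C]

lemma coset_bound {m : ℕ} (hm : m ≠ 0) (f : ZMod p → ℝ) (hf : ∀ c, 0 ≤ f c)
    {b : ZMod p} (hb : b ≠ 0)
    (hinv : ∀ u : (ZMod p)ˣ, f (b * (u : ZMod p) ^ m) = f b) :
    ((p : ℝ) - 1) * f b ≤ (m : ℝ) * ∑ c : ZMod p, f c := by
  classical
  have hcard : (Fintype.card (ZMod p)ˣ : ℝ) = (p : ℝ) - 1 := by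
    rw [ZMod.card_units_eq_totient, Nat.totient_prime (Fact.out : p.Prime)]
    have h2 : 2 ≤ p := (Fact.out : p.Prime).two_le
    push_cast [Nat.cast_sub (by omega : 1 ≤ p)]
    ring
  have h1 : ((p : ℝ) - 1) * f b = ∑ u : (ZMod p)ˣ, f (b * (u : ZMod p) ^ m) := by
    simp only [hinv]
    rw [Finset.sum_const, nsmul_eq_mul, Finset.card_univ, hcard]
  rw [h1]
  -- fiberwise
  have h2 : ∑ u : (ZMod p)ˣ, f (b * (u : ZMod p) ^ m)
      = ∑ c : ZMod p, ∑ _u ∈ (univ : Finset (ZMod p)ˣ).filter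
          (fun u : (ZMod p)ˣ => b * (u : ZMod p) ^ m = c), f c :=
    (Finset.sum_fiberwise' (univ : Finset (ZMod p)ˣ)
      (fun u => b * (u : ZMod p) ^ m) f).symm
  rw [h2]
  have h3 : ∀ c : ZMod p, ((univ : Finset (ZMod p)ˣ).filter
      (fun u : (ZMod p)ˣ => b * (u : ZMod p) ^ m = c)).card ≤ m := by
    intro c
    have hsub : ∀ u ∈ (univ : Finset (ZMod p)ˣ).filter
        (fun u : (ZMod p)ˣ => b * (u : ZMod p) ^ m = c),
        ((u : ZMod p)) ∈ (univ : Finset (ZMod p)).filter (fun x => x ^ m = b⁻¹ * c) := by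
      intro u hu
      rw [mem_filter] at hu ⊢
      refine ⟨mem_univ _, ?_⟩
      rw [← hu.2, ← mul_assoc, inv_mul_cancel₀ hb, one_mul]
    calc ((univ : Finset (ZMod p)ˣ).filter (fun u : (ZMod p)ˣ => b * (u : ZMod p) ^ m = c)).card
        ≤ ((univ : Finset (ZMod p)).filter (fun x => x ^ m = b⁻¹ * c)).card := by
          apply Finset.card_le_card_of_injOn (fun u : (ZMod p)ˣ => (u : ZMod p)) hsub
          intro u _ v _ huv
          exact Units.ext huv
      _ ≤ m := card_pow_le m hm _
  calc ∑ c : ZMod p, ∑ _u ∈ (univ : Finset (ZMod p)ˣ).filter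
          (fun u : (ZMod p)ˣ => b * (u : ZMod p) ^ m = c), f c
      ≤ ∑ c : ZMod p, (m : ℝ) * f c := by
        apply Finset.sum_le_sum
        intro c _
        rw [Finset.sum_const, nsmul_eq_mul]
        exact mul_le_mul_of_nonneg_right (by exact_mod_cast h3 c) (hf c)
    _ = (m : ℝ) * ∑ c : ZMod p, f c := by rw [← Finset.mul_sum]


noncomputable def Kk (p : ℕ) [NeZero p] (m : ℕ) (b : ZMod p) : ℂ :=
  ∑ t : ZMod p, ZMod.stdAddChar (t ^ m * b)

lemma sum_psi (b : ZMod p) :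
    ∑ t : ZMod p, ZMod.stdAddChar (t * b) = if b = 0 then (p : ℂ) else 0 := by
  rw [AddChar.sum_mulShift b (ZMod.isPrimitive_stdAddChar p)]
  simp [ZMod.card]

lemma Kk_zero (m : ℕ) : Kk p m 0 = (p : ℂ) := by
  simp [Kk, ZMod.card]

lemma Kk_inv (m : ℕ) (b : ZMod p) (u : (ZMod p)ˣ) :
    Kk p m (b * (u : ZMod p) ^ m) = Kk p m b := by
  unfold Kk
  have h := Fintype.sum_equiv (Equiv.mulRight₀ (u : ZMod p) u.ne_zero)
    (fun t : ZMod p => ZMod.stdAddChar (t ^ m * (b * (u : ZMod p) ^ m)))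
    (fun t : ZMod p => ZMod.stdAddChar (t ^ m * b)) ?_
  · exact h
  · intro t
    simp only [Equiv.mulRight₀_apply]
    congr 1
    ring

lemma mul_conj_norm (z : ℂ) : z * (starRingEnd ℂ) z = ((‖z‖ ^ 2 : ℝ) : ℂ) := by
  rw [RCLike.mul_conj]
  norm_num

lemma conj_psi (x : ZMod p) :
    (starRingEnd ℂ) (ZMod.stdAddChar x) = ZMod.stdAddChar (-x) := by
  rw [AddChar.map_neg_eq_inv, Complex.inv_def]
  have h1 : Complex.normSq (ZMod.stdAddChar x) = 1 := by
    have : ‖ZMod.stdAddChar x‖ = 1 := by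
      rw [ZMod.stdAddChar_apply, Circle.norm_coe]
    rw [Complex.normSq_eq_norm_sq, this]; norm_num
  rw [h1]; simp

lemma master (g : ZMod p → ℂ) (φ : ZMod p → ZMod p) :
    ((∑ b : ZMod p, ‖∑ t : ZMod p, g t * ZMod.stdAddChar (φ t * b)‖ ^ 2 : ℝ) : ℂ)
      = (p : ℂ) * ∑ t : ZMod p, ∑ s : ZMod p,
          (if φ t = φ s then g t * (starRingEnd ℂ) (g s) else 0) := by
  have step1 : ∀ b : ZMod p,
      ((‖∑ t : ZMod p, g t * ZMod.stdAddChar (φ t * b)‖ ^ 2 : ℝ) : ℂ)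
        = ∑ t : ZMod p, ∑ s : ZMod p,
            (g t * (starRingEnd ℂ) (g s)) * ZMod.stdAddChar ((φ t - φ s) * b) := by
    intro b
    have hterm : ∀ (z w : ℂ) (x y : ZMod p),
        (z * ZMod.stdAddChar x) * (starRingEnd ℂ) (w * ZMod.stdAddChar y)
          = (z * (starRingEnd ℂ) w) * ZMod.stdAddChar (x - y) := by
      intro z w x y
      rw [map_mul, conj_psi, show x - y = x + -y by ring, AddChar.map_add_eq_mul]
      ring
    rw [← mul_conj_norm, map_sum, Finset.sum_mul_sum]
    apply Finset.sum_congr rfl; intro t _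
    apply Finset.sum_congr rfl; intro s _
    rw [hterm, show φ t * b - φ s * b = (φ t - φ s) * b by ring]
  have lhs1 : ((∑ b : ZMod p, ‖∑ t : ZMod p, g t * ZMod.stdAddChar (φ t * b)‖ ^ 2 : ℝ) : ℂ)
      = ∑ b : ZMod p, ∑ t : ZMod p, ∑ s : ZMod p,
          (g t * (starRingEnd ℂ) (g s)) * ZMod.stdAddChar ((φ t - φ s) * b) := by
    push_cast
    exact Finset.sum_congr rfl fun b _ => by exact_mod_cast step1 b
  rw [lhs1, Finset.sum_comm]
  rw [Finset.mul_sum]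
  apply Finset.sum_congr rfl; intro t _
  rw [Finset.sum_comm, Finset.mul_sum]
  apply Finset.sum_congr rfl; intro s _
  rw [← Finset.mul_sum]
  have : ∑ b : ZMod p, ZMod.stdAddChar ((φ t - φ s) * b)
      = if φ t - φ s = 0 then (p : ℂ) else 0 := by
    rw [← sum_psi (φ t - φ s)]
    exact Finset.sum_congr rfl fun b _ => by rw [mul_comm]
  rw [this]
  by_cases h : φ t = φ s
  · rw [if_pos (by rw [h, sub_self]), if_pos h]; ring
  · rw [if_neg (sub_ne_zero.mpr h), if_neg h]; ring

lemma second_moment (m : ℕ) (hm : m ≠ 0) :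
    ∑ b : ZMod p, ‖Kk p m b‖ ^ 2 ≤ (m : ℝ) * (p : ℝ) ^ 2 := by
  classical
  have h0 := master (p := p) (fun _ => (1 : ℂ)) (fun t => t ^ m)
  simp only [one_mul, map_one, mul_one] at h0
  have h1 : ∑ b : ZMod p, ‖Kk p m b‖ ^ 2
      = (p : ℝ) * ∑ t : ZMod p, ∑ s : ZMod p, (if t ^ m = s ^ m then (1 : ℝ) else 0) := by
    have h2 : ((∑ b : ZMod p, ‖Kk p m b‖ ^ 2 : ℝ) : ℂ)
        = (((p : ℝ) * ∑ t : ZMod p, ∑ s : ZMod p,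
            (if t ^ m = s ^ m then (1 : ℝ) else 0) : ℝ) : ℂ) := by
      push_cast
      simp only [apply_ite (fun r : ℝ => (r : ℂ))] at *
      convert h0 using 2 <;> push_cast <;> rfl
    exact_mod_cast h2
  rw [h1]
  have h3 : ∀ t : ZMod p, ∑ s : ZMod p, (if t ^ m = s ^ m then (1 : ℝ) else 0) ≤ (m : ℝ) := by
    intro t
    have hle : (univ.filter (fun s : ZMod p => t ^ m = s ^ m)).card ≤ m := by
      refine le_trans (Finset.card_le_card ?_) (St6.card_pow_le m hm (t ^ m))
      intro s hs
      rw [mem_filter] at hs ⊢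
      exact ⟨hs.1, hs.2.symm⟩
    rw [Finset.sum_boole]
    exact_mod_cast hle
  calc (p : ℝ) * ∑ t : ZMod p, ∑ s : ZMod p, (if t ^ m = s ^ m then (1 : ℝ) else 0)
      ≤ (p : ℝ) * ∑ _t : ZMod p, (m : ℝ) := by
        apply mul_le_mul_of_nonneg_left (Finset.sum_le_sum fun t _ => h3 t)
          (by positivity)
    _ = (m : ℝ) * (p : ℝ) ^ 2 := by
        rw [Finset.sum_const, Finset.card_univ, ZMod.card, nsmul_eq_mul]
        ring

lemma parseval (g : ZMod p → ℂ) :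
    ∑ b : ZMod p, ‖∑ t : ZMod p, g t * ZMod.stdAddChar (t * b)‖ ^ 2
      = (p : ℝ) * ∑ t : ZMod p, ‖g t‖ ^ 2 := by
  classical
  have h0 := master (p := p) g (fun t => t)
  have h1 : ∑ t : ZMod p, ∑ s : ZMod p,
      (if t = s then g t * (starRingEnd ℂ) (g s) else 0)
      = ∑ t : ZMod p, ((‖g t‖ ^ 2 : ℝ) : ℂ) := by
    apply Finset.sum_congr rfl
    intro t _
    rw [Finset.sum_ite_eq (univ : Finset (ZMod p)) t (fun s => g t * (starRingEnd ℂ) (g s))]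
    simp [mul_conj_norm]
  rw [h1] at h0
  have h2 : ((∑ b : ZMod p, ‖∑ t : ZMod p, g t * ZMod.stdAddChar (t * b)‖ ^ 2 : ℝ) : ℂ)
      = (((p : ℝ) * ∑ t : ZMod p, ‖g t‖ ^ 2 : ℝ) : ℂ) := by
    rw [h0]; push_cast; ring
  exact_mod_cast h2

lemma Kk_bound (m : ℕ) (hm : m ≠ 0) {b : ZMod p} (hb : b ≠ 0) :
    ‖Kk p m b‖ ^ 2 ≤ 2 * (m : ℝ) ^ 2 * p := by
  have h1 := coset_bound hm (fun c => ‖Kk p m c‖ ^ 2) (fun c => by positivity) hb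
    (fun u => by
      show ‖Kk p m (b * (u : ZMod p) ^ m)‖ ^ 2 = ‖Kk p m b‖ ^ 2
      rw [Kk_inv])
  have h2 := second_moment (p := p) m hm
  have h3 : ((p : ℝ) - 1) * ‖Kk p m b‖ ^ 2 ≤ (m : ℝ) ^ 2 * (p : ℝ) ^ 2 := by
    refine h1.trans ?_
    calc (m : ℝ) * ∑ c : ZMod p, ‖Kk p m c‖ ^ 2 ≤ (m : ℝ) * ((m : ℝ) * (p : ℝ) ^ 2) :=
          mul_le_mul_of_nonneg_left h2 (by positivity)
      _ = (m : ℝ) ^ 2 * (p : ℝ) ^ 2 := by ring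
  have hp2 : (2 : ℝ) ≤ p := by exact_mod_cast (Fact.out : p.Prime).two_le
  have hX : (0 : ℝ) ≤ ‖Kk p m b‖ ^ 2 := by positivity
  nlinarith [mul_nonneg (mul_nonneg (sq_nonneg (m : ℝ)) (by linarith : (0:ℝ) ≤ (p:ℝ)))
    (by linarith : (0:ℝ) ≤ (p:ℝ) - 2), hX, h3]

def Ncube (p : ℕ) [NeZero p] (t : ZMod p) : ℕ :=
  ((univ : Finset (Fin 3 → ZMod p)).filter
    (fun x => x 0 ^ 3 + x 1 ^ 3 + x 2 ^ 3 = t)).card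

lemma sum_fiber (F : ZMod p → ℂ) :
    ∑ x : Fin 3 → ZMod p, F (x 0 ^ 3 + x 1 ^ 3 + x 2 ^ 3)
      = ∑ t : ZMod p, (Ncube p t : ℂ) * F t := by
  classical
  rw [← Finset.sum_fiberwise' (univ : Finset (Fin 3 → ZMod p))
    (fun x => x 0 ^ 3 + x 1 ^ 3 + x 2 ^ 3) F]
  apply Finset.sum_congr rfl
  intro t _
  rw [Finset.sum_const, nsmul_eq_mul, Ncube]

lemma pow3_sum (f : ZMod p → ℂ) :
    ∑ x : Fin 3 → ZMod p, ∏ i : Fin 3, f (x i) = (∑ t : ZMod p, f t) ^ 3 := by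
  classical
  have h2 : ∑ x ∈ Fintype.piFinset (fun _ : Fin 3 => (univ : Finset (ZMod p))),
      ∏ i : Fin 3, f (x i)
      = ∏ _i : Fin 3, ∑ t : ZMod p, f t :=
    (Finset.prod_univ_sum _ _).symm
  rw [← Fintype.piFinset_univ, h2, Finset.prod_const, Finset.card_univ, Fintype.card_fin]

lemma cube_sum (b : ZMod p) :
    ∑ x : Fin 3 → ZMod p, ZMod.stdAddChar ((x 0 ^ 3 + x 1 ^ 3 + x 2 ^ 3) * b)
      = (Kk p 3 b) ^ 3 := by
  classical
  have h1 : ∀ x : Fin 3 → ZMod p, ZMod.stdAddChar ((x 0 ^ 3 + x 1 ^ 3 + x 2 ^ 3) * b)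
      = ∏ i : Fin 3, ZMod.stdAddChar ((x i) ^ 3 * b) := by
    intro x
    rw [Fin.prod_univ_three,
      show (x 0 ^ 3 + x 1 ^ 3 + x 2 ^ 3) * b = (x 0 ^ 3 * b + x 1 ^ 3 * b) + x 2 ^ 3 * b by ring,
      AddChar.map_add_eq_mul, AddChar.map_add_eq_mul]
  rw [Finset.sum_congr rfl fun x _ => h1 x]
  exact pow3_sum (fun t => ZMod.stdAddChar (t ^ 3 * b))

lemma gsum (b : ZMod p) :
    ∑ t : ZMod p, ((Ncube p t : ℂ) - (p : ℂ) ^ 2) * ZMod.stdAddChar (t * b)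
      = if b = 0 then 0 else (Kk p 3 b) ^ 3 := by
  simp_rw [sub_mul]
  rw [Finset.sum_sub_distrib]
  have h1 : ∑ t : ZMod p, (Ncube p t : ℂ) * ZMod.stdAddChar (t * b) = (Kk p 3 b) ^ 3 := by
    rw [← sum_fiber (fun t => ZMod.stdAddChar (t * b))]
    exact cube_sum b
  have h2 : ∑ t : ZMod p, (p : ℂ) ^ 2 * ZMod.stdAddChar (t * b)
      = (p : ℂ) ^ 2 * (if b = 0 then (p : ℂ) else 0) := by
    rw [← Finset.mul_sum, sum_psi]
  rw [h1, h2]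
  by_cases hb : b = 0
  · rw [if_pos hb, if_pos hb, hb, Kk_zero]; ring
  · rw [if_neg hb, if_neg hb]; ring

theorem main_err (k : ℕ) (a : ZMod p) :
    ‖(∑ x : Fin 3 → ZMod p, ZMod.stdAddChar ((x 0 ^ 3 + x 1 ^ 3 + x 2 ^ 3) ^ k * a))
        - (p : ℂ) ^ 2 * Kk p k a‖ ≤ 32 * (p : ℝ) ^ 2 := by
  classical
  set g : ZMod p → ℂ := fun t => (Ncube p t : ℂ) - (p : ℂ) ^ 2 with hg
  have hdiff : (∑ x : Fin 3 → ZMod p, ZMod.stdAddChar ((x 0 ^ 3 + x 1 ^ 3 + x 2 ^ 3) ^ k * a))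
      - (p : ℂ) ^ 2 * Kk p k a
      = ∑ t : ZMod p, g t * ZMod.stdAddChar (t ^ k * a) := by
    have h1 : ∑ x : Fin 3 → ZMod p, ZMod.stdAddChar ((x 0 ^ 3 + x 1 ^ 3 + x 2 ^ 3) ^ k * a)
        = ∑ t : ZMod p, (Ncube p t : ℂ) * ZMod.stdAddChar (t ^ k * a) :=
      sum_fiber (fun t => ZMod.stdAddChar (t ^ k * a))
    have h2 : (p : ℂ) ^ 2 * Kk p k a
        = ∑ t : ZMod p, (p : ℂ) ^ 2 * ZMod.stdAddChar (t ^ k * a) := by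
      rw [Kk, Finset.mul_sum]
    rw [h1, h2, ← Finset.sum_sub_distrib]
    apply Finset.sum_congr rfl
    intro t _
    rw [hg]; ring
  rw [hdiff]
  have hnorm : ‖∑ t : ZMod p, g t * ZMod.stdAddChar (t ^ k * a)‖ ≤ ∑ t : ZMod p, ‖g t‖ := by
    refine (norm_sum_le _ _).trans (le_of_eq ?_)
    apply Finset.sum_congr rfl
    intro t _
    rw [norm_mul, norm_psi, mul_one]
  refine hnorm.trans ?_
  have hCS : (∑ t : ZMod p, ‖g t‖) ^ 2 ≤ (p : ℝ) * ∑ t : ZMod p, ‖g t‖ ^ 2 := by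
    have := sq_sum_le_card_mul_sum_sq (s := (univ : Finset (ZMod p)))
      (f := fun t => ‖g t‖)
    simpa [Finset.card_univ, ZMod.card] using this
  have hP : (p : ℝ) * ∑ t : ZMod p, ‖g t‖ ^ 2 ≤ 972 * (p : ℝ) ^ 4 := by
    rw [← parseval g]
    have hb : ∀ b : ZMod p, ‖∑ t : ZMod p, g t * ZMod.stdAddChar (t * b)‖ ^ 2
        = if b = 0 then 0 else ‖Kk p 3 b‖ ^ 6 := by
      intro b
      rw [gsum b]
      split_ifs
      · simp
      · rw [norm_pow]; ring
    rw [Finset.sum_congr rfl (fun b _ => hb b)]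
    have hstep : ∀ b : ZMod p, (if b = 0 then (0:ℝ) else ‖Kk p 3 b‖ ^ 6)
        ≤ 324 * (p : ℝ) ^ 2 * ‖Kk p 3 b‖ ^ 2 := by
      intro b
      split_ifs with h
      · positivity
      · have hKb := Kk_bound 3 (by norm_num) h
        have hX : (0 : ℝ) ≤ ‖Kk p 3 b‖ ^ 2 := by positivity
        have h6 : ‖Kk p 3 b‖ ^ 6 = (‖Kk p 3 b‖ ^ 2) ^ 2 * ‖Kk p 3 b‖ ^ 2 := by ring
        rw [h6]
        have h18 : ‖Kk p 3 b‖ ^ 2 ≤ 18 * (p : ℝ) := by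
          refine hKb.trans (le_of_eq ?_); norm_num
        have hp0 : (0 : ℝ) ≤ p := Nat.cast_nonneg p
        have hX2 : (‖Kk p 3 b‖ ^ 2) ^ 2 ≤ (18 * (p:ℝ)) ^ 2 := by nlinarith [hX, h18]
        calc (‖Kk p 3 b‖ ^ 2) ^ 2 * ‖Kk p 3 b‖ ^ 2 ≤ (18 * (p:ℝ)) ^ 2 * ‖Kk p 3 b‖ ^ 2 :=
              mul_le_mul_of_nonneg_right hX2 hX
          _ = 324 * (p : ℝ) ^ 2 * ‖Kk p 3 b‖ ^ 2 := by ring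
    calc ∑ b : ZMod p, (if b = 0 then (0:ℝ) else ‖Kk p 3 b‖ ^ 6)
        ≤ ∑ b : ZMod p, 324 * (p : ℝ) ^ 2 * ‖Kk p 3 b‖ ^ 2 := Finset.sum_le_sum fun b _ => hstep b
      _ = 324 * (p : ℝ) ^ 2 * ∑ b : ZMod p, ‖Kk p 3 b‖ ^ 2 := by rw [← Finset.mul_sum]
      _ ≤ 324 * (p : ℝ) ^ 2 * (3 * (p : ℝ) ^ 2) := by
          refine mul_le_mul_of_nonneg_left ?_ (by positivity)
          have := second_moment (p := p) 3 (by norm_num)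
          refine this.trans (le_of_eq ?_); norm_num
      _ = 972 * (p : ℝ) ^ 4 := by ring
  have hfinal : (∑ t : ZMod p, ‖g t‖) ^ 2 ≤ (32 * (p : ℝ) ^ 2) ^ 2 := by
    refine (hCS.trans hP).trans ?_
    have hp0 : (0 : ℝ) ≤ p := Nat.cast_nonneg p
    nlinarith [pow_nonneg hp0 4]
  have h1 : (0 : ℝ) ≤ ∑ t : ZMod p, ‖g t‖ := Finset.sum_nonneg fun t _ => norm_nonneg _
  have h2 : (0 : ℝ) ≤ 32 * (p : ℝ) ^ 2 := by positivity
  nlinarith [hfinal, h1, h2]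

theorem K_bound {m : ℕ} (hm : m ≠ 0) {a : ZMod p} (ha : a ≠ 0) :
    ‖Kk p m a‖ ≤ 2 * m * Real.sqrt p := by
  have h := Kk_bound m hm ha
  have hp0 : (0 : ℝ) ≤ p := Nat.cast_nonneg p
  have h2 : (2 * (m : ℝ) * Real.sqrt p) ^ 2 = 4 * (m : ℝ) ^ 2 * p := by
    rw [mul_pow, mul_pow, Real.sq_sqrt hp0]; ring
  have hsq : ‖Kk p m a‖ ^ 2 ≤ (2 * (m : ℝ) * Real.sqrt p) ^ 2 := by
    rw [h2]
    nlinarith [h, sq_nonneg ((m:ℝ)), hp0]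
  have h1 : (0 : ℝ) ≤ ‖Kk p m a‖ := norm_nonneg _
  have h3 : (0 : ℝ) ≤ 2 * (m : ℝ) * Real.sqrt p := by positivity
  nlinarith [hsq, h1, h3]

lemma jmem (x : ZMod p) : (if x = 0 then p else x.val) ∈ Finset.Icc 1 p := by
  have hp1 : 1 ≤ p := (Fact.out : p.Prime).pos
  rw [Finset.mem_Icc]
  split_ifs with h
  · exact ⟨hp1, le_refl p⟩
  · exact ⟨Nat.one_le_iff_ne_zero.mpr (fun h0 => h ((ZMod.val_eq_zero x).mp h0)),
      le_of_lt (ZMod.val_lt x)⟩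

lemma ij (x : ZMod p) : (((if x = 0 then p else x.val) : ℕ) : ZMod p) = x := by
  split_ifs with h
  · rw [ZMod.natCast_self, h]
  · exact ZMod.natCast_zmod_val x

lemma ji {r : ℕ} (hr : r ∈ Finset.Icc 1 p) :
    (if ((r : ZMod p)) = 0 then p else ((r : ZMod p)).val) = r := by
  rw [Finset.mem_Icc] at hr
  split_ifs with h
  · rw [ZMod.natCast_eq_zero_iff] at h
    exact Nat.le_antisymm (Nat.le_of_dvd (by omega) h) hr.2
  · have hlt : r < p := by
      rcases Nat.lt_or_ge r p with h1 | h1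
      · exact h1
      · exfalso
        have : r = p := le_antisymm hr.2 h1
        rw [this, ZMod.natCast_self] at h
        exact h rfl
    rw [ZMod.val_cast_of_lt hlt]

lemma reindex (f : ZMod p → ℂ) :
    ∑ r ∈ Finset.Icc 1 p, f ((r : ℕ) : ZMod p) = ∑ x : ZMod p, f x := by
  refine Finset.sum_nbij' (fun r => ((r : ℕ) : ZMod p))
    (fun x => if x = 0 then p else x.val) (fun r _ => Finset.mem_univ _)
    (fun x _ => jmem x) (fun r hr => ji hr) (fun x _ => ij x) (fun r _ => rfl)

lemma reindex3 (f : (Fin 3 → ZMod p) → ℂ) :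
    ∑ r ∈ Fintype.piFinset (fun _ : Fin 3 => Finset.Icc 1 p),
      f (fun i => ((r i : ℕ) : ZMod p)) = ∑ x : Fin 3 → ZMod p, f x := by
  refine Finset.sum_nbij' (fun r => (fun i => ((r i : ℕ) : ZMod p)))
    (fun x => (fun i => if x i = 0 then p else (x i).val)) (fun r _ => Finset.mem_univ _)
    ?_ ?_ ?_ (fun r _ => rfl)
  · intro x _
    rw [Fintype.mem_piFinset]
    exact fun i => jmem (x i)
  · intro r hr
    rw [Fintype.mem_piFinset] at hr
    funext i
    exact ji (hr i)
  · intro x _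
    funext i
    exact ij (x i)

end St6


lemma aux_e_eq {p : ℕ} [Fact p.Prime] (z : ℤ) :
    e ((z : ℝ) / p) = ZMod.stdAddChar ((z : ZMod p)) := by
  rw [ZMod.stdAddChar_coe, e]
  congr 1
  push_cast
  ring

lemma aux_Ska_eq (k p : ℕ) [Fact p.Prime] (a : ℤ) :
    Ska k p a = St6.Kk p k ((a : ZMod p)) := by
  calc Ska k p a
      = ∑ r ∈ Finset.Icc 1 p,
          ZMod.stdAddChar ((((r : ℕ) : ZMod p)) ^ k * ((a : ZMod p))) := by
        apply Finset.sum_congr rfl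
        intro r _
        rw [aux_e_eq]
        congr 1
        push_cast
        ring
    _ = ∑ x : ZMod p, ZMod.stdAddChar (x ^ k * ((a : ZMod p))) :=
        St6.reindex (fun x => ZMod.stdAddChar (x ^ k * ((a : ZMod p))))
    _ = St6.Kk p k ((a : ZMod p)) := rfl

lemma aux_Sqa_eq (k p : ℕ) [Fact p.Prime] (a : ℤ) :
    Sqa k p a = ∑ x : Fin 3 → ZMod p,
      ZMod.stdAddChar ((x 0 ^ 3 + x 1 ^ 3 + x 2 ^ 3) ^ k * ((a : ZMod p))) := by
  calc Sqa k p a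
      = ∑ r ∈ Fintype.piFinset (fun _ : Fin 3 => Finset.Icc 1 p),
          ZMod.stdAddChar (((((r 0 : ℕ) : ZMod p)) ^ 3 + (((r 1 : ℕ) : ZMod p)) ^ 3
            + (((r 2 : ℕ) : ZMod p)) ^ 3) ^ k * ((a : ZMod p))) := by
        apply Finset.sum_congr rfl
        intro r _
        rw [aux_e_eq]
        congr 1
        simp only [Tn]
        push_cast
        ring
    _ = ∑ x : Fin 3 → ZMod p,
          ZMod.stdAddChar ((x 0 ^ 3 + x 1 ^ 3 + x 2 ^ 3) ^ k * ((a : ZMod p))) :=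
        St6.reindex3 (fun x => ZMod.stdAddChar ((x 0 ^ 3 + x 1 ^ 3 + x 2 ^ 3) ^ k
          * ((a : ZMod p))))

end Statement6Proof

set_option maxHeartbeats 1000000 in
/-- `S(p,a) = p² S_k(p,a) + O(p²)`, and in particular `S(p,a) ≪ p^{5/2}`. -/
theorem statement6 (k : ℕ) (hk : 2 ≤ k) :
    ∃ C > (0 : ℝ), ∀ p : ℕ, p.Prime → ∀ a : ℤ, Int.gcd a p = 1 →
      ‖Sqa k p a - (p : ℂ) ^ 2 * Ska k p a‖ ≤ C * (p : ℝ) ^ 2 ∧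
      ‖Sqa k p a‖ ≤ C * (p : ℝ) ^ ((5 : ℝ) / 2) := by
  refine ⟨2 * (k : ℝ) + 32, by positivity, ?_⟩
  intro p pp a hgcd
  haveI : Fact p.Prime := ⟨pp⟩
  have hk0 : k ≠ 0 := by omega
  have ha : ((a : ZMod p)) ≠ 0 := by
    intro h0
    rw [ZMod.intCast_zmod_eq_zero_iff_dvd] at h0
    obtain ⟨u, v, huv⟩ := Int.isCoprime_iff_gcd_eq_one.mpr hgcd
    have hdvd : (p : ℤ) ∣ 1 := by
      rw [← huv]
      exact dvd_add (Dvd.dvd.mul_left h0 u) (Dvd.dvd.mul_left dvd_rfl v)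
    have h2 := Int.le_of_dvd one_pos hdvd
    have h3 : 2 ≤ p := pp.two_le
    omega
  have herr := St6.main_err (p := p) k ((a : ZMod p))
  have hK := St6.K_bound (p := p) (m := k) hk0 ha
  rw [aux_Sqa_eq, aux_Ska_eq]
  constructor
  · refine herr.trans ?_
    have hk' : (0 : ℝ) ≤ (k : ℝ) := Nat.cast_nonneg k
    nlinarith [sq_nonneg ((p : ℝ))]
  · set A := ∑ x : Fin 3 → ZMod p,
      ZMod.stdAddChar ((x 0 ^ 3 + x 1 ^ 3 + x 2 ^ 3) ^ k * ((a : ZMod p))) with hA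
    have htri : ‖A‖ - ‖(p : ℂ) ^ 2 * St6.Kk p k ((a : ZMod p))‖
        ≤ ‖A - (p : ℂ) ^ 2 * St6.Kk p k ((a : ZMod p))‖ :=
      norm_sub_norm_le _ _
    have hnorm2 : ‖(p : ℂ) ^ 2 * St6.Kk p k ((a : ZMod p))‖
        = (p : ℝ) ^ 2 * ‖St6.Kk p k ((a : ZMod p))‖ := by
      rw [norm_mul, norm_pow, Complex.norm_natCast]
    have hp0 : (0 : ℝ) < p := by exact_mod_cast pp.pos
    have h52 : (p : ℝ) ^ ((5 : ℝ) / 2) = (p : ℝ) ^ 2 * Real.sqrt p := by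
      rw [show ((5 : ℝ) / 2) = ((2 : ℕ) : ℝ) + (1 / 2 : ℝ) by norm_num, Real.rpow_add hp0,
        Real.rpow_natCast, ← Real.sqrt_eq_rpow]
    have hs1 : 1 ≤ Real.sqrt p := by
      have h1p : (1 : ℝ) ≤ p := by exact_mod_cast pp.pos
      have := Real.sqrt_le_sqrt h1p
      rwa [Real.sqrt_one] at this
    rw [h52]
    have hk' : (0 : ℝ) ≤ (k : ℝ) := Nat.cast_nonneg k
    have hKK : (p : ℝ) ^ 2 * ‖St6.Kk p k ((a : ZMod p))‖
        ≤ (p : ℝ) ^ 2 * (2 * k * Real.sqrt p) :=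
      mul_le_mul_of_nonneg_left hK (by positivity)
    have hmain : ‖A‖ ≤ 32 * (p : ℝ) ^ 2 + (p : ℝ) ^ 2 * (2 * k * Real.sqrt p) := by
      rw [hnorm2] at htri
      linarith [herr, htri, hKK]
    refine hmain.trans ?_
    nlinarith [sq_nonneg ((p : ℝ)), hs1, hk', hp0.le]


end
end

section
/- Let h ∈ ℕ and let p be a prime. If p ≠ 3, then ℳ_{3,3}(p^h) = ℤ/p^hℤ, i.e. every residue class modulo p^h is of the form x1³ + x2³ + x3³ with p ∤ x1. If p = 3, then ℳ_{3,3}(3) = ℤ/3ℤ, and for h ≥ 2 one has ℳ_{3,3}(3^h) = { x ∈ ℤ/3^hℤ : x ≢ 4 (mod 9) and x ≢ 5 (mod 9) }. -/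
open scoped Real Classical
open Finset MeasureTheory

noncomputable section

section Aux

open Pointwise

def RepCube (p h : ℕ) (Y : ℤ) : Prop :=
  ∃ x1 x2 x3 : ℤ, ¬ (p : ℤ) ∣ x1 ∧ (p : ℤ) ^ h ∣ (x1 ^ 3 + x2 ^ 3 + x3 ^ 3 - Y)

lemma cube_fiber_card {p : ℕ} [Fact p.Prime] (a : ZMod p) :
    ((univ : Finset (ZMod p)).filter (fun x => x ^ 3 = a)).card ≤ 3 := by
  classical
  have h0 : (Polynomial.X ^ 3 - Polynomial.C a : Polynomial (ZMod p)) ≠ 0 := by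
    intro h
    have := congrArg Polynomial.natDegree h
    simp [Polynomial.natDegree_X_pow_sub_C] at this
  calc ((univ : Finset (ZMod p)).filter (fun x => x ^ 3 = a)).card
      ≤ (Polynomial.X ^ 3 - Polynomial.C a : Polynomial (ZMod p)).roots.toFinset.card := by
        apply Finset.card_le_card
        intro x hx
        simp only [mem_filter] at hx
        simp [Multiset.mem_toFinset, Polynomial.mem_roots, h0, Polynomial.IsRoot, hx.2]
    _ ≤ (Polynomial.X ^ 3 - Polynomial.C a : Polynomial (ZMod p)).roots.card :=
        Multiset.toFinset_card_le _
    _ ≤ 3 := by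
        have := Polynomial.card_roots' (Polynomial.X ^ 3 - Polynomial.C a : Polynomial (ZMod p))
        simpa [Polynomial.natDegree_X_pow_sub_C] using this

lemma cube_sum_surj (p : ℕ) (hp : p.Prime) (y : ZMod p) :
    ∃ a b c : ZMod p, a ≠ 0 ∧ a ^ 3 + b ^ 3 + c ^ 3 = y := by
  classical
  haveI : Fact p.Prime := ⟨hp⟩
  by_cases hy : y = 0
  · exact ⟨1, -1, 0, one_ne_zero, by rw [hy]; ring⟩
  -- K = image of cubing
  set K : Finset (ZMod p) := (univ : Finset (ZMod p)).image (fun x => x ^ 3) with hK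
  have h0K : (0 : ZMod p) ∈ K := by
    simp only [hK, mem_image]
    exact ⟨0, mem_univ _, by ring⟩
  have hKne : K.Nonempty := ⟨0, h0K⟩
  -- card bound : p + 2 ≤ 3 * K.card
  have hcard : p + 2 ≤ 3 * K.card := by
    have hsum : (univ : Finset (ZMod p)).card
        = ∑ a ∈ K, ((univ : Finset (ZMod p)).filter (fun x => x ^ 3 = a)).card :=
      Finset.card_eq_sum_card_fiberwise (fun x _ => mem_image_of_mem _ (mem_univ x))
    have hzero : ((univ : Finset (ZMod p)).filter (fun x => x ^ 3 = (0 : ZMod p))).card = 1 := by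
      have : (univ : Finset (ZMod p)).filter (fun x => x ^ 3 = (0 : ZMod p)) = {0} := by
        ext x; simp [pow_eq_zero_iff]
      rw [this]; simp
    have hsplit : ∑ a ∈ K, ((univ : Finset (ZMod p)).filter (fun x => x ^ 3 = a)).card
        = 1 + ∑ a ∈ K.erase 0, ((univ : Finset (ZMod p)).filter (fun x => x ^ 3 = a)).card := by
      rw [← Finset.add_sum_erase _ _ h0K, hzero]
    have hbound : ∑ a ∈ K.erase 0, ((univ : Finset (ZMod p)).filter (fun x => x ^ 3 = a)).card
        ≤ 3 * (K.card - 1) := by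
      calc ∑ a ∈ K.erase 0, ((univ : Finset (ZMod p)).filter (fun x => x ^ 3 = a)).card
          ≤ ∑ _a ∈ K.erase 0, 3 := Finset.sum_le_sum (fun a _ => cube_fiber_card a)
        _ = 3 * (K.card - 1) := by rw [Finset.sum_const, Finset.card_erase_of_mem h0K]; ring
    have hKpos : 1 ≤ K.card := Finset.card_pos.mpr hKne
    have hp2 : p = (univ : Finset (ZMod p)).card := (ZMod.card p).symm
    omega
  -- Cauchy-Davenport twice
  have h1 : min p (K.card + K.card - 1) ≤ (K + K).card := ZMod.cauchy_davenport hp hKne hKne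
  have hKKne : (K + K).Nonempty := hKne.add hKne
  have h2 : min p ((K + K).card + K.card - 1) ≤ (K + K + K).card :=
    ZMod.cauchy_davenport hp hKKne hKne
  have hall : (K + K + K).card = p → K + K + K = univ := by
    intro hc
    apply Finset.eq_univ_of_card
    rw [hc, ZMod.card]
  have hple : p ≤ (K + K + K).card := by
    rcases le_or_gt p (K.card + K.card - 1) with h | h
    · rcases le_or_gt p ((K + K).card + K.card - 1) with h' | h'
      · omega
      · have := Finset.card_le_card (Finset.subset_univ (K + K))
        rw [Finset.card_univ, ZMod.card] at this
        omega
    · have := Finset.card_le_card (Finset.subset_univ (K + K))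
      rw [Finset.card_univ, ZMod.card] at this
      omega
  have hmem : y ∈ K + K + K := by
    have : K + K + K = univ := by
      apply Finset.eq_univ_of_card
      have := Finset.card_le_card (Finset.subset_univ (K + K + K))
      rw [Finset.card_univ, ZMod.card] at this
      rw [ZMod.card]; omega
    rw [this]; exact mem_univ _
  rw [Finset.mem_add] at hmem
  obtain ⟨u, hu, w, hw, huw⟩ := hmem
  rw [Finset.mem_add] at hu
  obtain ⟨u1, hu1, u2, hu2, hu12⟩ := hu
  simp only [hK, mem_image, mem_univ, true_and] at hu1 hu2 hw
  obtain ⟨a, ha⟩ := hu1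
  obtain ⟨b, hb⟩ := hu2
  obtain ⟨c, hc⟩ := hw
  have hsum : a ^ 3 + b ^ 3 + c ^ 3 = y := by rw [ha, hb, hc, hu12, huw]
  -- some of a, b, c nonzero since y ≠ 0; reorder
  by_cases h1 : a ≠ 0
  · exact ⟨a, b, c, h1, hsum⟩
  by_cases h2 : b ≠ 0
  · exact ⟨b, a, c, h2, by rw [← hsum]; ring⟩
  by_cases h3 : c ≠ 0
  · exact ⟨c, a, b, h3, by rw [← hsum]; ring⟩
  · push_neg at h1 h2 h3
    exfalso
    apply hy
    rw [← hsum, h1, h2, h3]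
    ring

-- lifting for p ≠ 3
lemma rep_lift (p : ℕ) (hp : p.Prime) (hp3 : p ≠ 3) (h : ℕ) (hh : 1 ≤ h) (Y : ℤ)
    (hr : RepCube p h Y) : RepCube p (h + 1) Y := by
  haveI : Fact p.Prime := ⟨hp⟩
  obtain ⟨x1, x2, x3, hx1, m, hm⟩ := hr
  have h3ne : (3 : ZMod p) ≠ 0 := by
    intro hc
    have : (p : ℤ) ∣ 3 := by
      have := (ZMod.intCast_zmod_eq_zero_iff_dvd 3 p).mp (by exact_mod_cast hc)
      exact this
    have : p ∣ 3 := by exact_mod_cast this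
    exact hp3 ((Nat.prime_dvd_prime_iff_eq hp Nat.prime_three).mp this)
  have hx1ne : ((x1 : ZMod p)) ≠ 0 := fun hc =>
    hx1 ((ZMod.intCast_zmod_eq_zero_iff_dvd x1 p).mp hc)
  have hu : (3 * (x1 : ZMod p) ^ 2) ≠ 0 := by
    exact mul_ne_zero h3ne (pow_ne_zero _ hx1ne)
  set t : ℤ := (((-(m : ZMod p) * (3 * (x1 : ZMod p) ^ 2)⁻¹ : ZMod p)).val : ℤ) with ht
  have hdvd : (p : ℤ) ∣ (m + 3 * x1 ^ 2 * t) := by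
    rw [← ZMod.intCast_zmod_eq_zero_iff_dvd]
    push_cast
    have htv : ((t : ℤ) : ZMod p) = -(m : ZMod p) * (3 * (x1 : ZMod p) ^ 2)⁻¹ := by
      rw [ht]; push_cast [ZMod.natCast_val, ZMod.cast_id]; ring
    rw [htv]
    field_simp
    ring
  obtain ⟨k, hk⟩ := hdvd
  refine ⟨x1 + t * p ^ h, x2, x3, ?_, ?_⟩
  · intro hc
    apply hx1
    have h2 : (p : ℤ) ∣ t * p ^ h := Dvd.dvd.mul_left (dvd_pow_self (p:ℤ) (by omega)) t
    simpa using hc.sub h2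
  · have key : (x1 + t * p ^ h) ^ 3 + x2 ^ 3 + x3 ^ 3 - Y
        = (p:ℤ) ^ h * (m + 3 * x1 ^ 2 * t) + (p:ℤ) ^ (2*h) * (3 * x1 * t ^ 2)
          + (p:ℤ) ^ (3*h) * t ^ 3 := by
      have e2 : (p:ℤ) ^ (2*h) = ((p:ℤ)^h)^2 := by rw [pow_mul']
      have e3 : (p:ℤ) ^ (3*h) = ((p:ℤ)^h)^3 := by rw [pow_mul']
      rw [e2, e3]
      linear_combination hm
    rw [key, hk]
    have d1 : (p:ℤ)^(h+1) ∣ (p:ℤ) ^ h * ((p:ℤ) * k) := ⟨k, by ring⟩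
    have d2 : (p:ℤ)^(h+1) ∣ (p:ℤ) ^ (2*h) * (3 * x1 * t ^ 2) :=
      Dvd.dvd.mul_right (pow_dvd_pow _ (by omega)) _
    have d3 : (p:ℤ)^(h+1) ∣ (p:ℤ) ^ (3*h) * t ^ 3 :=
      Dvd.dvd.mul_right (pow_dvd_pow _ (by omega)) _
    exact dvd_add (dvd_add d1 d2) d3

-- lifting for p = 3, from 3^(e+1) to 3^(e+2), e ≥ 1
lemma rep_lift3 (e : ℕ) (he : 1 ≤ e) (Y : ℤ) (hr : RepCube 3 (e + 1) Y) : RepCube 3 (e + 2) Y := by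
  haveI : Fact (Nat.Prime 3) := ⟨Nat.prime_three⟩
  obtain ⟨x1, x2, x3, hx1, m, hm⟩ := hr
  have hx1ne : ((x1 : ZMod 3)) ≠ 0 := fun hc =>
    hx1 (by exact_mod_cast (ZMod.intCast_zmod_eq_zero_iff_dvd x1 3).mp hc)
  have hu : ((x1 : ZMod 3) ^ 2) ≠ 0 := pow_ne_zero _ hx1ne
  set t : ℤ := (((-(m : ZMod 3) * ((x1 : ZMod 3) ^ 2)⁻¹ : ZMod 3)).val : ℤ) with ht
  have hdvd : (3 : ℤ) ∣ (m + x1 ^ 2 * t) := by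
    have := (ZMod.intCast_zmod_eq_zero_iff_dvd (m + x1 ^ 2 * t) 3).mp ?_
    · exact_mod_cast this
    · push_cast
      have htv : ((t : ℤ) : ZMod 3) = -(m : ZMod 3) * ((x1 : ZMod 3) ^ 2)⁻¹ := by
        rw [ht]; push_cast [ZMod.natCast_val, ZMod.cast_id]; ring
      rw [htv]
      field_simp
      ring
  obtain ⟨k, hk⟩ := hdvd
  refine ⟨x1 + t * 3 ^ e, x2, x3, ?_, ?_⟩
  · intro hc
    apply hx1
    have h2 : (3 : ℤ) ∣ t * 3 ^ e := Dvd.dvd.mul_left (dvd_pow_self (3:ℤ) (by omega)) t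
    have := hc.sub h2
    simpa using this
  · have key : (x1 + t * 3 ^ e) ^ 3 + x2 ^ 3 + x3 ^ 3 - Y
        = (3:ℤ) ^ (e+1) * (m + x1 ^ 2 * t) + (3:ℤ) ^ (2*e+1) * (x1 * t ^ 2)
          + (3:ℤ) ^ (3*e) * t ^ 3 := by
      have e1 : (3:ℤ) ^ (2*e+1) = 3 * ((3:ℤ)^e)^2 := by rw [pow_succ, pow_mul']; ring
      have e3 : (3:ℤ) ^ (3*e) = ((3:ℤ)^e)^3 := by rw [pow_mul']
      have e0 : (3:ℤ) ^ (e+1) = 3 * (3:ℤ)^e := by rw [pow_succ]; ring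
      rw [e1, e3, e0]
      have hm' : x1 ^ 3 + x2 ^ 3 + x3 ^ 3 - Y = 3 * (3:ℤ)^e * m := by
        rw [hm, pow_succ]; ring
      linear_combination hm'
    rw [key, hk]
    have d1 : (3:ℤ)^(e+2) ∣ (3:ℤ) ^ (e+1) * ((3:ℤ) * k) := ⟨k, by ring⟩
    have d2 : (3:ℤ)^(e+2) ∣ (3:ℤ) ^ (2*e+1) * (x1 * t ^ 2) :=
      Dvd.dvd.mul_right (pow_dvd_pow _ (by omega)) _
    have d3 : (3:ℤ)^(e+2) ∣ (3:ℤ) ^ (3*e) * t ^ 3 :=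
      Dvd.dvd.mul_right (pow_dvd_pow _ (by omega)) _
    exact dvd_add (dvd_add d1 d2) d3

lemma zmod9_exists : ∀ y : ZMod 9, y.val ≠ 4 → y.val ≠ 5 →
    ∃ a b c : ZMod 9, (ZMod.castHom (by norm_num : (3:ℕ) ∣ 9) (ZMod 3) a ≠ 0) ∧
      a ^ 3 + b ^ 3 + c ^ 3 = y := by decide

lemma zmod9_forall : ∀ a b c : ZMod 9, ZMod.castHom (by norm_num : (3:ℕ) ∣ 9) (ZMod 3) a ≠ 0 →
    (a ^ 3 + b ^ 3 + c ^ 3).val ≠ 4 ∧ (a ^ 3 + b ^ 3 + c ^ 3).val ≠ 5 := by decide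

lemma rep_base (p : ℕ) (hp : p.Prime) (Y : ℤ) : RepCube p 1 Y := by
  haveI : Fact p.Prime := ⟨hp⟩
  obtain ⟨a, b, c, ha, habc⟩ := cube_sum_surj p hp (Y : ZMod p)
  have hca : ((a.val : ℤ) : ZMod p) = a := by
    push_cast [ZMod.natCast_val, ZMod.cast_id]; rfl
  have hcb : ((b.val : ℤ) : ZMod p) = b := by
    push_cast [ZMod.natCast_val, ZMod.cast_id]; rfl
  have hcc : ((c.val : ℤ) : ZMod p) = c := by
    push_cast [ZMod.natCast_val, ZMod.cast_id]; rfl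
  refine ⟨(a.val : ℤ), (b.val : ℤ), (c.val : ℤ), ?_, ?_⟩
  · intro hd
    exact ha (hca ▸ (ZMod.intCast_zmod_eq_zero_iff_dvd _ p).mpr hd)
  · rw [pow_one]
    have : (((a.val : ℤ) ^ 3 + (b.val : ℤ) ^ 3 + (c.val : ℤ) ^ 3 - Y : ℤ) : ZMod p) = 0 := by
      push_cast [hca, hcb, hcc]
      rw [sub_eq_zero]
      exact_mod_cast habc
    exact (ZMod.intCast_zmod_eq_zero_iff_dvd _ p).mp this

lemma rep_base9 (Y : ℤ) (h4 : ((Y : ZMod 9)).val ≠ 4) (h5 : ((Y : ZMod 9)).val ≠ 5) :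
    RepCube 3 2 Y := by
  obtain ⟨a, b, c, ha, habc⟩ := zmod9_exists (Y : ZMod 9) h4 h5
  have hca : ((a.val : ℤ) : ZMod 9) = a := by
    push_cast [ZMod.natCast_val, ZMod.cast_id]; rfl
  have hcb : ((b.val : ℤ) : ZMod 9) = b := by
    push_cast [ZMod.natCast_val, ZMod.cast_id]; rfl
  have hcc : ((c.val : ℤ) : ZMod 9) = c := by
    push_cast [ZMod.natCast_val, ZMod.cast_id]; rfl
  refine ⟨(a.val : ℤ), (b.val : ℤ), (c.val : ℤ), ?_, ?_⟩
  · intro hd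
    apply ha
    have h3 : (((a.val : ℤ)) : ZMod 3) = 0 := (ZMod.intCast_zmod_eq_zero_iff_dvd _ 3).mpr hd
    have : ZMod.castHom (by norm_num : (3:ℕ) ∣ 9) (ZMod 3) a = ((a.val : ℤ) : ZMod 3) := by
      rw [ZMod.castHom_apply]
      push_cast [ZMod.natCast_val]
      rfl
    rw [this, h3]
  · have : (((a.val : ℤ) ^ 3 + (b.val : ℤ) ^ 3 + (c.val : ℤ) ^ 3 - Y : ℤ) : ZMod 9) = 0 := by
      push_cast [hca, hcb, hcc]
      rw [sub_eq_zero]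
      exact_mod_cast habc
    have hd := (ZMod.intCast_zmod_eq_zero_iff_dvd _ 9).mp this
    convert hd using 1
    norm_num

lemma rep_all (p : ℕ) (hp : p.Prime) (hp3 : p ≠ 3) (h : ℕ) (hh : 1 ≤ h) (Y : ℤ) :
    RepCube p h Y := by
  induction h, hh using Nat.le_induction with
  | base => exact rep_base p hp Y
  | succ n hn ih => exact rep_lift p hp hp3 n hn Y ih

lemma rep_all3 (h : ℕ) (hh : 2 ≤ h) (Y : ℤ) (h4 : ((Y : ZMod 9)).val ≠ 4)
    (h5 : ((Y : ZMod 9)).val ≠ 5) : RepCube 3 h Y := by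
  induction h, hh using Nat.le_induction with
  | base => exact rep_base9 Y h4 h5
  | succ n hn ih =>
    obtain ⟨e, rfl⟩ : ∃ e, n = e + 1 := ⟨n - 1, by omega⟩
    exact rep_lift3 e (by omega) Y ih

lemma forward9 (h : ℕ) (hh : 2 ≤ h) (x1 x2 x3 : ℤ) (hx1 : ¬ (3:ℤ) ∣ x1)
    (y : ZMod (3 ^ h)) (heq : ((x1 ^ 3 + x2 ^ 3 + x3 ^ 3 : ℤ) : ZMod (3 ^ h)) = y) :
    y.val % 9 ≠ 4 ∧ y.val % 9 ≠ 5 := by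
  haveI : NeZero (3 ^ h) := ⟨pow_ne_zero h (by norm_num)⟩
  have h9 : (9 : ℕ) ∣ 3 ^ h := by
    have : (3:ℕ) ^ 2 ∣ 3 ^ h := pow_dvd_pow 3 hh
    simpa using this
  set φ := ZMod.castHom h9 (ZMod 9) with hφ
  have h1 : φ y = ((x1 ^ 3 + x2 ^ 3 + x3 ^ 3 : ℤ) : ZMod 9) := by
    rw [← heq, map_intCast]
  have h2 : φ y = (y.val : ZMod 9) := by
    rw [hφ, ZMod.castHom_apply, ← ZMod.natCast_val]
  have hval : ((x1 ^ 3 + x2 ^ 3 + x3 ^ 3 : ℤ) : ZMod 9).val = y.val % 9 := by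
    rw [← h1, h2, ZMod.val_natCast]
  have hS : ((x1 ^ 3 + x2 ^ 3 + x3 ^ 3 : ℤ) : ZMod 9)
      = (x1 : ZMod 9) ^ 3 + (x2 : ZMod 9) ^ 3 + (x3 : ZMod 9) ^ 3 := by push_cast; ring
  have hane : ZMod.castHom (by norm_num : (3:ℕ) ∣ 9) (ZMod 3) ((x1 : ZMod 9)) ≠ 0 := by
    rw [map_intCast]
    intro hc
    exact hx1 ((ZMod.intCast_zmod_eq_zero_iff_dvd _ 3).mp (by exact_mod_cast hc))
  have := zmod9_forall (x1 : ZMod 9) (x2 : ZMod 9) (x3 : ZMod 9) hane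
  rw [← hS] at this
  rw [← hval]
  exact this

-- from a RepCube witness to membership in M33
lemma mem_of_rep (p h : ℕ) (hp : p.Prime) (hh : 1 ≤ h) (y : ZMod (p ^ h))
    (hr : RepCube p h ((y.val : ℤ))) : y ∈ M33 (p ^ h) p := by
  haveI : NeZero (p ^ h) := ⟨pow_ne_zero h hp.pos.ne'⟩
  obtain ⟨x1, x2, x3, hx1, hdvd⟩ := hr
  refine ⟨![x1, x2, x3], ?_, ?_⟩
  · simpa using hx1
  · simp only [Matrix.cons_val_zero, Matrix.cons_val_one, Matrix.head_cons,
      Matrix.cons_val_two, Matrix.tail_cons]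
    have hd' : ((p ^ h : ℕ) : ℤ) ∣ (x1 ^ 3 + x2 ^ 3 + x3 ^ 3 - (y.val : ℤ)) := by
      exact_mod_cast hdvd
    have h0 : ((x1 ^ 3 + x2 ^ 3 + x3 ^ 3 - (y.val : ℤ) : ℤ) : ZMod (p ^ h)) = 0 :=
      (ZMod.intCast_zmod_eq_zero_iff_dvd _ _).mpr hd'
    have : ((x1 ^ 3 + x2 ^ 3 + x3 ^ 3 : ℤ) : ZMod (p ^ h)) = ((y.val : ℤ) : ZMod (p ^ h)) := by
      push_cast at h0 ⊢
      linear_combination h0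
    rw [this]
    push_cast [ZMod.natCast_val, ZMod.cast_id]
    rfl

end Aux

/-- Description of `ℳ_{3,3}(p^h)`. -/
theorem statement8 (p : ℕ) (hp : p.Prime) (h : ℕ) (hh : 1 ≤ h) :
    (p ≠ 3 → M33 (p ^ h) p = Set.univ) ∧
    (p = 3 →
      (h = 1 → M33 (p ^ h) p = Set.univ) ∧
      (2 ≤ h → M33 (p ^ h) p = {y : ZMod (p ^ h) | y.val % 9 ≠ 4 ∧ y.val % 9 ≠ 5})) := by
  constructor
  · intro hp3
    apply Set.eq_univ_of_forall
    intro y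
    exact mem_of_rep p h hp hh y (rep_all p hp hp3 h hh _)
  · rintro rfl
    constructor
    · rintro rfl
      apply Set.eq_univ_of_forall
      intro y
      exact mem_of_rep 3 1 hp le_rfl y (rep_base 3 hp _)
    · intro h2
      ext y
      constructor
      · rintro ⟨x, hx1, heq⟩
        exact forward9 h h2 (x 0) (x 1) (x 2) (by exact_mod_cast hx1) y heq
      · rintro ⟨h4, h5⟩
        apply mem_of_rep 3 h hp hh y
        apply rep_all3 h h2
        · rw [show (((y.val : ℤ)) : ZMod 9) = ((y.val : ℕ) : ZMod 9) by push_cast; rfl,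
            ZMod.val_natCast]
          exact h4
        · rw [show (((y.val : ℤ)) : ZMod 9) = ((y.val : ℕ) : ZMod 9) by push_cast; rfl,
            ZMod.val_natCast]
          exact h5

end
end

section
/- Let a ∈ ℤ and q ∈ ℕ with gcd(a,q) = 1 and q < P, let α ∈ [0,1) and set β = α − a/q. Then f(α) = q^{−3} S(q,a) v(β) + O( P² q (1 + n|β|) ), with implicit constant depending at most on k. -/
open scoped Real Classical
open Finset MeasureTheory

noncomputable section

section AuxStatement11
open Set

lemma e_add (x y : ℝ) : e (x + y) = e x * e y := by
  simp [e, ← Complex.exp_add]; ring_nf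

lemma norm_e (x : ℝ) : ‖e x‖ = 1 := by
  simp [e, Complex.norm_exp]

lemma e_int (m : ℤ) : e m = 1 := by
  simp only [e]
  rw [show 2 * (Real.pi:ℂ) * Complex.I * (m:ℝ) = (m:ℤ) * (2 * Real.pi * Complex.I) by push_cast; ring]
  exact Complex.exp_int_mul_two_pi_mul_I m

lemma e_hasDeriv (b c : ℝ) (k : ℕ) (t : ℝ) :
    HasDerivAt (fun t : ℝ => e (b * (t ^ 3 + c) ^ k))
      ((2 * Real.pi * Complex.I * (b * (k * (t ^ 3 + c) ^ (k - 1) * (3 * t ^ 2)))) *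
        e (b * (t ^ 3 + c) ^ k)) t := by
  have h2 : HasDerivAt (fun t : ℝ => t ^ 3 + c) (3 * t ^ 2) t := by
    simpa using ((hasDerivAt_pow 3 t).add_const c)
  have h3 : HasDerivAt (fun t : ℝ => (t ^ 3 + c) ^ k)
      ((k * (t ^ 3 + c) ^ (k - 1)) * (3 * t ^ 2)) t := h2.pow k
  have h1 : HasDerivAt (fun t : ℝ => b * (t ^ 3 + c) ^ k)
      (b * (k * (t ^ 3 + c) ^ (k - 1) * (3 * t ^ 2))) t := by
    simpa [mul_assoc] using h3.const_mul b
  have h4 : HasDerivAt (fun t : ℝ => ((b * (t ^ 3 + c) ^ k : ℝ) : ℂ))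
      ((b * (k * (t ^ 3 + c) ^ (k - 1) * (3 * t ^ 2)) : ℝ) : ℂ) t := h1.ofReal_comp
  have h5 := (h4.const_mul (2 * (Real.pi : ℂ) * Complex.I)).cexp
  simp only [e]
  convert h5 using 1
  push_cast
  ring

lemma lip1 (b c R : ℝ) (k : ℕ) (hc : 0 ≤ c) (hcR : c ≤ 2 * R ^ 3)
    (s t : ℝ) (hs : s ∈ Icc 0 R) (ht : t ∈ Icc 0 R) :
    ‖e (b * (s ^ 3 + c) ^ k) - e (b * (t ^ 3 + c) ^ k)‖ ≤
      (2 * Real.pi * |b| * k * (3 * R ^ 3) ^ (k - 1) * (3 * R ^ 2)) * |s - t| := by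
  have hR : 0 ≤ R := le_trans hs.1 hs.2
  have key := Convex.norm_image_sub_le_of_norm_hasDerivWithin_le
    (f := fun t : ℝ => e (b * (t ^ 3 + c) ^ k))
    (f' := fun t : ℝ => (2 * Real.pi * Complex.I * (b * (k * (t ^ 3 + c) ^ (k - 1) * (3 * t ^ 2)))) *
        e (b * (t ^ 3 + c) ^ k))
    (C := 2 * Real.pi * |b| * k * (3 * R ^ 3) ^ (k - 1) * (3 * R ^ 2))
    (s := Icc (0:ℝ) R)
    (fun x _ => (e_hasDeriv b c k x).hasDerivWithinAt)
    (fun x hx => by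
      rw [norm_mul, norm_e, mul_one]
      have hx0 : (0:ℝ) ≤ x := hx.1
      have hxR : x ≤ R := hx.2
      have h1 : ‖(2 * (Real.pi:ℂ) * Complex.I * (b * (k * (x ^ 3 + c) ^ (k - 1) * (3 * x ^ 2))))‖
          = 2 * Real.pi * (|b| * (k * |x ^ 3 + c| ^ (k - 1) * (3 * x ^ 2))) := by
        rw [show (2 * (Real.pi:ℂ) * Complex.I * (b * (k * (x ^ 3 + c) ^ (k - 1) * (3 * x ^ 2))))
            = (((2 * Real.pi * (b * (k * (x ^ 3 + c) ^ (k - 1) * (3 * x ^ 2))) : ℝ) : ℂ)) * Complex.I by push_cast; ring]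
        rw [norm_mul, Complex.norm_I, mul_one, Complex.norm_real, Real.norm_eq_abs,
          abs_mul, abs_mul, abs_mul, abs_mul, abs_mul, abs_pow]
        rw [abs_of_nonneg (by positivity : (0:ℝ) ≤ (2:ℝ)), abs_of_nonneg Real.pi_nonneg,
          abs_of_nonneg (by positivity : (0:ℝ) ≤ (k:ℝ)), abs_of_nonneg (by positivity : (0:ℝ) ≤ 3 * x ^ 2)]
      rw [h1]
      have h2 : |x ^ 3 + c| ≤ 3 * R ^ 3 := by
        rw [abs_of_nonneg (by positivity)]
        nlinarith [pow_le_pow_left₀ hx0 hxR 3]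
      have h3 : |x ^ 3 + c| ^ (k - 1) ≤ (3 * R ^ 3) ^ (k - 1) :=
        pow_le_pow_left₀ (abs_nonneg _) h2 _
      have h4 : x ^ 2 ≤ R ^ 2 := pow_le_pow_left₀ hx0 hxR 2
      have hpi : (0:ℝ) ≤ 2 * Real.pi := by positivity
      calc 2 * Real.pi * (|b| * (↑k * |x ^ 3 + c| ^ (k - 1) * (3 * x ^ 2)))
          ≤ 2 * Real.pi * (|b| * (↑k * (3 * R ^ 3) ^ (k - 1) * (3 * R ^ 2))) := by
            apply mul_le_mul_of_nonneg_left _ hpi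
            apply mul_le_mul_of_nonneg_left _ (abs_nonneg b)
            apply mul_le_mul (mul_le_mul_of_nonneg_left h3 (by positivity)) (by nlinarith) (by positivity) (by positivity)
        _ = 2 * Real.pi * |b| * ↑k * (3 * R ^ 3) ^ (k - 1) * (3 * R ^ 2) := by ring)
    (convex_Icc 0 R) ht hs
  simpa [Real.norm_eq_abs] using key

lemma lip3 (b R q : ℝ) (k : ℕ) (hq : 0 ≤ q) (z w : Fin 3 → ℝ)
    (hz : ∀ i, z i ∈ Icc 0 R) (hw : ∀ i, w i ∈ Icc 0 R) (hd : ∀ i, |z i - w i| ≤ q) :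
    ‖e (b * Tr z ^ k) - e (b * Tr w ^ k)‖ ≤
      3 * ((2 * Real.pi * |b| * k * (3 * R ^ 3) ^ (k - 1) * (3 * R ^ 2)) * q) := by
  have hR : 0 ≤ R := le_trans (hz 0).1 (hz 0).2
  set L : ℝ := 2 * Real.pi * |b| * k * (3 * R ^ 3) ^ (k - 1) * (3 * R ^ 2) with hLdef
  have hL : 0 ≤ L := by
    rw [hLdef]
    have h1 : (0:ℝ) ≤ (3 * R ^ 3) ^ (k - 1) := pow_nonneg (by positivity) _
    have h2 : (0:ℝ) ≤ 2 * Real.pi := by positivity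
    have h3 : (0:ℝ) ≤ 3 * R ^ 2 := by positivity
    exact mul_nonneg (mul_nonneg (mul_nonneg (mul_nonneg h2 (abs_nonneg b)) (Nat.cast_nonneg k)) h1) h3
  have hcub : ∀ x : ℝ, x ∈ Icc 0 R → 0 ≤ x ^ 3 ∧ x ^ 3 ≤ R ^ 3 := fun x hx =>
    ⟨pow_nonneg hx.1 3, pow_le_pow_left₀ hx.1 hx.2 3⟩
  have key : ∀ s t c : ℝ, s ∈ Icc 0 R → t ∈ Icc 0 R → 0 ≤ c → c ≤ 2 * R ^ 3 →
      |s - t| ≤ q → ‖e (b * (s ^ 3 + c) ^ k) - e (b * (t ^ 3 + c) ^ k)‖ ≤ L * q := by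
    intro s t c hs ht hc hcR hst
    exact le_trans (lip1 b c R k hc hcR s t hs ht) (mul_le_mul_of_nonneg_left hst hL)
  have e1 : e (b * Tr z ^ k) = e (b * ((z 0) ^ 3 + ((z 1) ^ 3 + (z 2) ^ 3)) ^ k) := by
    unfold Tr; ring_nf
  have e2 : e (b * Tr w ^ k) = e (b * ((w 2) ^ 3 + ((w 0) ^ 3 + (w 1) ^ 3)) ^ k) := by
    unfold Tr; ring_nf
  have m1 : e (b * ((w 0) ^ 3 + ((z 1) ^ 3 + (z 2) ^ 3)) ^ k)
      = e (b * ((z 1) ^ 3 + ((w 0) ^ 3 + (z 2) ^ 3)) ^ k) := by ring_nf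
  have m2 : e (b * ((w 1) ^ 3 + ((w 0) ^ 3 + (z 2) ^ 3)) ^ k)
      = e (b * ((z 2) ^ 3 + ((w 0) ^ 3 + (w 1) ^ 3)) ^ k) := by ring_nf
  have s1 : ‖e (b * ((z 0) ^ 3 + ((z 1) ^ 3 + (z 2) ^ 3)) ^ k)
      - e (b * ((w 0) ^ 3 + ((z 1) ^ 3 + (z 2) ^ 3)) ^ k)‖ ≤ L * q := by
    apply key _ _ _ (hz 0) (hw 0) _ _ (hd 0)
    · have := (hcub _ (hz 1)).1; have := (hcub _ (hz 2)).1; linarith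
    · have := (hcub _ (hz 1)).2; have := (hcub _ (hz 2)).2; linarith
  have s2 : ‖e (b * ((z 1) ^ 3 + ((w 0) ^ 3 + (z 2) ^ 3)) ^ k)
      - e (b * ((w 1) ^ 3 + ((w 0) ^ 3 + (z 2) ^ 3)) ^ k)‖ ≤ L * q := by
    apply key _ _ _ (hz 1) (hw 1) _ _ (hd 1)
    · have := (hcub _ (hw 0)).1; have := (hcub _ (hz 2)).1; linarith
    · have := (hcub _ (hw 0)).2; have := (hcub _ (hz 2)).2; linarith
  have s3 : ‖e (b * ((z 2) ^ 3 + ((w 0) ^ 3 + (w 1) ^ 3)) ^ k)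
      - e (b * ((w 2) ^ 3 + ((w 0) ^ 3 + (w 1) ^ 3)) ^ k)‖ ≤ L * q := by
    apply key _ _ _ (hz 2) (hw 2) _ _ (hd 2)
    · have := (hcub _ (hw 0)).1; have := (hcub _ (hw 1)).1; linarith
    · have := (hcub _ (hw 0)).2; have := (hcub _ (hw 1)).2; linarith
  calc ‖e (b * Tr z ^ k) - e (b * Tr w ^ k)‖
      ≤ ‖e (b * ((z 0) ^ 3 + ((z 1) ^ 3 + (z 2) ^ 3)) ^ k)
          - e (b * ((w 0) ^ 3 + ((z 1) ^ 3 + (z 2) ^ 3)) ^ k)‖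
        + ‖e (b * ((z 1) ^ 3 + ((w 0) ^ 3 + (z 2) ^ 3)) ^ k)
          - e (b * ((w 1) ^ 3 + ((w 0) ^ 3 + (z 2) ^ 3)) ^ k)‖
        + ‖e (b * ((z 2) ^ 3 + ((w 0) ^ 3 + (w 1) ^ 3)) ^ k)
          - e (b * ((w 2) ^ 3 + ((w 0) ^ 3 + (w 1) ^ 3)) ^ k)‖ := by
        rw [e1, e2, ← m1, ← m2]
        exact norm_sub_le_norm_sub_add_norm_sub _ _ _ |>.trans (by
          gcongr; exact norm_sub_le_norm_sub_add_norm_sub _ _ _)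
    _ ≤ L * q + L * q + L * q := by gcongr
    _ = 3 * (L * q) := by ring

lemma cont_e : Continuous e :=
  Complex.continuous_exp.comp (continuous_const.mul Complex.continuous_ofReal)

lemma cont_F (b : ℝ) (k : ℕ) : Continuous (fun x : Fin 3 → ℝ => e (b * Tr x ^ k)) := by
  apply cont_e.comp
  unfold Tr
  fun_prop

lemma integrableOn_F (b : ℝ) (k : ℕ) (u v : Fin 3 → ℝ) :
    IntegrableOn (fun x : Fin 3 → ℝ => e (b * Tr x ^ k))
      (Set.univ.pi fun i => Icc (u i) (v i)) := by
  exact (cont_F b k).continuousOn.integrableOn_compact (isCompact_univ_pi fun i => isCompact_Icc)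

lemma integrableOn_F_Ioc (b : ℝ) (k : ℕ) (u v : Fin 3 → ℝ) :
    IntegrableOn (fun x : Fin 3 → ℝ => e (b * Tr x ^ k))
      (Set.univ.pi fun i => Ioc (u i) (v i)) :=
  (integrableOn_F b k u v).mono_set (Set.pi_mono fun i _ => Ioc_subset_Icc_self)

lemma meas_box (u v : Fin 3 → ℝ) :
    MeasurableSet (Set.univ.pi fun i => Ioc (u i) (v i)) :=
  MeasurableSet.univ_pi fun i => measurableSet_Ioc

lemma vol_box (u v : Fin 3 → ℝ) :
    volume (Set.univ.pi fun i => Ioc (u i) (v i)) = ∏ i, ENNReal.ofReal (v i - u i) := by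
  rw [volume_pi_pi]
  simp [Real.volume_Ioc]

lemma vol_box_toReal (u v : Fin 3 → ℝ) (h : ∀ i, u i ≤ v i) :
    (volume (Set.univ.pi fun i => Ioc (u i) (v i))).toReal = ∏ i, (v i - u i) := by
  rw [vol_box, ENNReal.toReal_prod]
  exact Finset.prod_congr rfl fun i _ => ENNReal.toReal_ofReal (by linarith [h i])

lemma vol_box_lt_top (u v : Fin 3 → ℝ) :
    volume (Set.univ.pi fun i => Ioc (u i) (v i)) < ⊤ := by
  rw [vol_box]
  exact ENNReal.prod_lt_top fun i _ => ENNReal.ofReal_lt_top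

lemma box_step (b : ℝ) (k : ℕ) (R : ℝ) (u : Fin 3 → ℝ) (j : Fin 3) (a : ℝ)
    (hu : ∀ i, 0 ≤ u i ∧ u i ≤ R) (ha : 0 ≤ a) (hau : a ≤ u j) :
    ‖(∫ x in Set.univ.pi fun i => Ioc 0 (u i), e (b * Tr x ^ k))
      - ∫ x in Set.univ.pi fun i => Ioc 0 (Function.update u j a i), e (b * Tr x ^ k)‖
      ≤ (u j - a) * R ^ 2 := by
  have hR : 0 ≤ R := (hu j).1.trans (hu j).2
  set s := Set.univ.pi fun i => Ioc (0:ℝ) (u i) with hs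
  set t := Set.univ.pi fun i => Ioc (0:ℝ) (Function.update u j a i) with hts
  have hsub : t ⊆ s := by
    apply Set.pi_mono
    intro i _
    rcases eq_or_ne i j with rfl | hij
    · simp [Set.Ioc_subset_Ioc_right hau]
    · simp [Function.update_of_ne hij]
  have hdiff := integral_diff (f := fun x : Fin 3 → ℝ => e (b * Tr x ^ k)) (μ := volume)
    (meas_box _ _) (integrableOn_F_Ioc b k _ _) hsub
  rw [← hdiff]
  have hb : ∀ x ∈ s \ t, ‖e (b * Tr x ^ k)‖ ≤ 1 := fun x _ => le_of_eq (norm_e _)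
  have hlt : volume (s \ t) < ⊤ := lt_of_le_of_lt (measure_mono diff_subset) (vol_box_lt_top _ _)
  have := norm_setIntegral_le_of_norm_le_const (μ := volume) hlt hb
  refine this.trans ?_
  rw [one_mul, measureReal_def]
  have hmd : volume (s \ t) = volume s - volume t :=
    measure_diff hsub (meas_box _ _).nullMeasurableSet (vol_box_lt_top _ _).ne
  have hle : volume t ≤ volume s := measure_mono hsub
  rw [hmd, ENNReal.toReal_sub_of_le hle (vol_box_lt_top _ _).ne]
  rw [vol_box_toReal _ _ (fun i => (hu i).1), vol_box_toReal]
  swap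
  · intro i; rcases eq_or_ne i j with rfl | hij
    · simpa using ha
    · simpa [Function.update_of_ne hij] using (hu i).1
  have hprod : ∏ i, (Function.update u j a i - 0) = a * ∏ i ∈ Finset.univ.erase j, u i := by
    rw [show (fun i => Function.update u j a i - 0) = Function.update (fun i => u i - 0) j (a - 0) by
      ext i; rcases eq_or_ne i j with rfl | hij
      · simp
      · simp [Function.update_of_ne hij]]
    rw [Finset.prod_update_of_mem (Finset.mem_univ j)]
    simp [Finset.erase_eq]
  have hprod2 : ∏ i, (u i - 0) = u j * ∏ i ∈ Finset.univ.erase j, u i := by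
    simp only [sub_zero]
    rw [← Finset.prod_erase_mul Finset.univ u (Finset.mem_univ j)]
    ring
  rw [hprod, hprod2]
  have hrest : ∏ i ∈ Finset.univ.erase j, u i ≤ R ^ 2 := by
    have hcard : (Finset.univ.erase j).card = 2 := by
      simp [Finset.card_erase_of_mem]
    calc ∏ i ∈ Finset.univ.erase j, u i ≤ ∏ _i ∈ Finset.univ.erase j, R :=
          Finset.prod_le_prod (fun i _ => (hu i).1) (fun i _ => (hu i).2)
      _ = R ^ 2 := by rw [Finset.prod_const, hcard]
  have hrest0 : 0 ≤ ∏ i ∈ Finset.univ.erase j, u i :=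
    Finset.prod_nonneg fun i _ => (hu i).1
  calc u j * ∏ i ∈ Finset.univ.erase j, u i - a * ∏ i ∈ Finset.univ.erase j, u i
      = (u j - a) * ∏ i ∈ Finset.univ.erase j, u i := by ring
    _ ≤ (u j - a) * R ^ 2 := mul_le_mul_of_nonneg_left hrest (by linarith)

lemma box_step' (b : ℝ) (k : ℕ) (R : ℝ) (u : Fin 3 → ℝ) (j : Fin 3) (a d : ℝ)
    (hu : ∀ i, 0 ≤ u i ∧ u i ≤ R) (ha : 0 ≤ a) (haR : a ≤ R) (hd : |u j - a| ≤ d) :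
    ‖(∫ x in Set.univ.pi fun i => Ioc 0 (u i), e (b * Tr x ^ k))
      - ∫ x in Set.univ.pi fun i => Ioc 0 (Function.update u j a i), e (b * Tr x ^ k)‖
      ≤ d * R ^ 2 := by
  have hR : 0 ≤ R := le_trans (hu j).1 (hu j).2
  rcases le_total a (u j) with h | h
  · refine (box_step b k R u j a hu ha h).trans ?_
    have : u j - a ≤ d := by rw [abs_of_nonneg (by linarith)] at hd; linarith
    apply mul_le_mul_of_nonneg_right this (by positivity)
  · have hu' : ∀ i, 0 ≤ Function.update u j a i ∧ Function.update u j a i ≤ R := by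
      intro i
      rcases eq_or_ne i j with rfl | hij
      · simp [ha, haR]
      · simp [Function.update_of_ne hij, hu i]
    have h2 := box_step b k R (Function.update u j a) j (u j) hu' (hu j).1 (by simp [h])
    rw [Function.update_idem, Function.update_eq_self] at h2
    rw [norm_sub_rev]
    refine h2.trans ?_
    have : Function.update u j a j - u j ≤ d := by
      simp only [Function.update_self]
      rw [abs_of_nonpos (by linarith)] at hd; linarith
    apply mul_le_mul_of_nonneg_right this (by positivity)

lemma box_compare (b : ℝ) (k : ℕ) (R : ℝ) (A B : Fin 3 → ℝ) (d : ℝ)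
    (hA : ∀ i, 0 ≤ A i ∧ A i ≤ R) (hB : ∀ i, 0 ≤ B i ∧ B i ≤ R)
    (hAB : ∀ i, |A i - B i| ≤ d) :
    ‖(∫ x in Set.univ.pi fun i => Ioc 0 (A i), e (b * Tr x ^ k))
      - ∫ x in Set.univ.pi fun i => Ioc 0 (B i), e (b * Tr x ^ k)‖ ≤ 3 * (d * R ^ 2) := by
  set C1 := Function.update A 0 (B 0) with hC1
  set C2 := Function.update C1 1 (B 1) with hC2
  have hC3 : Function.update C2 2 (B 2) = B := by
    funext i
    fin_cases i <;> simp [hC2, hC1, Function.update]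
  have hC1b : ∀ i, 0 ≤ C1 i ∧ C1 i ≤ R := by
    intro i; rcases eq_or_ne i 0 with rfl | hi
    · simpa [hC1] using hB 0
    · simpa [hC1, Function.update_of_ne hi] using hA i
  have hC2b : ∀ i, 0 ≤ C2 i ∧ C2 i ≤ R := by
    intro i; rcases eq_or_ne i 1 with rfl | hi
    · simpa [hC2] using hB 1
    · simpa [hC2, Function.update_of_ne hi] using hC1b i
  have s1 := box_step' b k R A 0 (B 0) d hA (hB 0).1 (hB 0).2 (hAB 0)
  have s2 := box_step' b k R C1 1 (B 1) d hC1b (hB 1).1 (hB 1).2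
    (by simpa [hC1, Function.update_of_ne (show (1:Fin 3) ≠ 0 by decide)] using hAB 1)
  have s3 := box_step' b k R C2 2 (B 2) d hC2b (hB 2).1 (hB 2).2
    (by
      have : C2 2 = A 2 := by
        simp [hC2, hC1, Function.update_of_ne (show (2:Fin 3) ≠ 1 by decide),
          Function.update_of_ne (show (2:Fin 3) ≠ 0 by decide)]
      rw [this]; exact hAB 2)
  rw [hC3] at s3
  calc ‖(∫ x in Set.univ.pi fun i => Ioc 0 (A i), e (b * Tr x ^ k))
      - ∫ x in Set.univ.pi fun i => Ioc 0 (B i), e (b * Tr x ^ k)‖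
      ≤ ‖(∫ x in Set.univ.pi fun i => Ioc 0 (A i), e (b * Tr x ^ k))
          - ∫ x in Set.univ.pi fun i => Ioc 0 (C1 i), e (b * Tr x ^ k)‖
        + ‖(∫ x in Set.univ.pi fun i => Ioc 0 (C1 i), e (b * Tr x ^ k))
          - ∫ x in Set.univ.pi fun i => Ioc 0 (C2 i), e (b * Tr x ^ k)‖
        + ‖(∫ x in Set.univ.pi fun i => Ioc 0 (C2 i), e (b * Tr x ^ k))
          - ∫ x in Set.univ.pi fun i => Ioc 0 (B i), e (b * Tr x ^ k)‖ := by
        exact norm_sub_le_norm_sub_add_norm_sub _ _ _ |>.trans (by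
          gcongr; exact norm_sub_le_norm_sub_add_norm_sub _ _ _)
    _ ≤ d * R ^ 2 + d * R ^ 2 + d * R ^ 2 := by gcongr <;> assumption
    _ = 3 * (d * R ^ 2) := by ring

lemma box_partition (b : ℝ) (k : ℕ) (q : ℕ) (hq : 1 ≤ q) (Y : Fin 3 → ℕ) :
    (∫ x in Set.univ.pi fun i => Ioc (0:ℝ) ((q : ℝ) * (Y i + 1)), e (b * Tr x ^ k))
      = ∑ y ∈ Fintype.piFinset (fun i : Fin 3 => Finset.range (Y i + 1)),
          ∫ x in Set.univ.pi fun i => Ioc ((q : ℝ) * y i) ((q : ℝ) * y i + q),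
            e (b * Tr x ^ k) := by
  have hq0 : (0:ℝ) < q := by exact_mod_cast hq
  have hunion : (Set.univ.pi fun i => Ioc (0:ℝ) ((q : ℝ) * (Y i + 1)))
      = ⋃ y ∈ Fintype.piFinset (fun i : Fin 3 => Finset.range (Y i + 1)),
          Set.univ.pi fun i => Ioc ((q : ℝ) * y i) ((q : ℝ) * y i + q) := by
    ext x
    simp only [Set.mem_iUnion, Set.mem_pi, Set.mem_univ, forall_true_left, Set.mem_Ioc,
      Fintype.mem_piFinset, Finset.mem_range, exists_prop]
    constructor
    · intro hx
      refine ⟨fun i => ⌈x i / q⌉₊ - 1, fun i => ?_, fun i => ?_⟩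
      · show ⌈x i / (q:ℝ)⌉₊ - 1 < Y i + 1
        have h1 : x i / q ≤ (Y i : ℝ) + 1 := by
          rw [div_le_iff₀ hq0]; linarith [(hx i).2, mul_comm ((Y i : ℝ) + 1) (q:ℝ)]
        have h2 : ⌈x i / q⌉₊ ≤ Y i + 1 := by
          have := Nat.ceil_le_ceil h1
          calc ⌈x i / q⌉₊ ≤ ⌈((Y i : ℝ) + 1)⌉₊ := Nat.ceil_le_ceil h1
            _ = Y i + 1 := by rw [show ((Y i : ℝ) + 1) = ((Y i + 1 : ℕ) : ℝ) by push_cast; ring,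
                Nat.ceil_natCast]
        omega
      · show (q:ℝ) * ((⌈x i / (q:ℝ)⌉₊ - 1 : ℕ) : ℝ) < x i ∧ x i ≤ (q:ℝ) * ((⌈x i / (q:ℝ)⌉₊ - 1 : ℕ) : ℝ) + q
        have hpos : 0 < x i / q := div_pos (hx i).1 hq0
        have hc1 : 1 ≤ ⌈x i / q⌉₊ := Nat.one_le_ceil_iff.mpr hpos
        constructor
        · have : ((⌈x i / q⌉₊ - 1 : ℕ) : ℝ) < x i / q := by
            rw [← Nat.lt_ceil]; omega
          calc (q:ℝ) * (⌈x i / q⌉₊ - 1 : ℕ) < q * (x i / q) :=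
              mul_lt_mul_of_pos_left this hq0
            _ = x i := by field_simp
        · have h3 : x i / q ≤ ⌈x i / q⌉₊ := Nat.le_ceil _
          have h4 : ((⌈x i / q⌉₊ - 1 : ℕ) : ℝ) + 1 = (⌈x i / q⌉₊ : ℝ) := by
            push_cast [Nat.cast_sub hc1]; ring
          calc x i = q * (x i / q) := by field_simp
            _ ≤ q * ⌈x i / q⌉₊ := mul_le_mul_of_nonneg_left h3 hq0.le
            _ = q * ((⌈x i / q⌉₊ - 1 : ℕ) : ℝ) + q := by rw [← h4]; ring
    · rintro ⟨y, hy, hxy⟩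
      intro i
      constructor
      · have : (0:ℝ) ≤ (q:ℝ) * y i := by positivity
        linarith [(hxy i).1]
      · have : (y i : ℝ) + 1 ≤ (Y i : ℝ) + 1 := by
          have h5 := hy i
          have h6 : y i + 1 ≤ Y i + 1 := by omega
          exact_mod_cast h6
        calc x i ≤ (q:ℝ) * y i + q := (hxy i).2
          _ = q * ((y i : ℝ) + 1) := by ring
          _ ≤ q * ((Y i : ℝ) + 1) := mul_le_mul_of_nonneg_left this hq0.le
  rw [hunion]
  apply integral_biUnion_finset
  · exact fun y _ => meas_box _ _
  · intro y hy z hz hyz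
    have : ∃ i, y i ≠ z i := by
      by_contra h
      push_neg at h
      exact hyz (funext h)
    obtain ⟨i, hi⟩ := this
    simp only [Function.onFun]
    rw [Set.disjoint_left]
    intro x hx1 hx2
    have h1 := hx1 i (Set.mem_univ i)
    have h2 := hx2 i (Set.mem_univ i)
    simp only [Set.mem_Ioc] at h1 h2
    rcases Nat.lt_or_ge (y i) (z i) with h | h
    · have : (q:ℝ) * y i + q ≤ q * z i := by
        have : (y i : ℝ) + 1 ≤ z i := by exact_mod_cast h
        nlinarith
      linarith [h1.2, h2.1]
    · rcases Nat.lt_or_ge (z i) (y i) with h' | h'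
      · have : (q:ℝ) * z i + q ≤ q * y i := by
          have : (z i : ℝ) + 1 ≤ y i := by exact_mod_cast h'
          nlinarith
        linarith [h1.1, h2.2]
      · omega
  · exact fun y _ => integrableOn_F_Ioc b k _ _

lemma cube_est (b : ℝ) (k : ℕ) (R : ℝ) (q : ℕ) (hq : 1 ≤ q) (y : Fin 3 → ℕ) (w : Fin 3 → ℝ)
    (hw : ∀ i, w i ∈ Icc ((q:ℝ) * y i) ((q:ℝ) * y i + q))
    (hbox : ∀ i, (q:ℝ) * y i + q ≤ R) :
    ‖(∫ x in Set.univ.pi fun i => Ioc ((q:ℝ) * y i) ((q:ℝ) * y i + q), e (b * Tr x ^ k))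
        - ((q:ℝ) ^ 3) • e (b * Tr w ^ k)‖
      ≤ (q:ℝ) ^ 3 * (3 * ((2 * Real.pi * |b| * k * (3 * R ^ 3) ^ (k - 1) * (3 * R ^ 2)) * q)) := by
  have hq0 : (0:ℝ) < q := by exact_mod_cast hq
  set s := Set.univ.pi fun i => Ioc ((q:ℝ) * y i) ((q:ℝ) * y i + q) with hs
  have hle : ∀ i, (q:ℝ) * y i ≤ (q:ℝ) * y i + q := fun i => by linarith
  have hvol : (volume s).toReal = (q:ℝ) ^ 3 := by
    rw [hs, vol_box_toReal _ _ hle]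
    simp [Finset.prod_const]
  have hconst : ∫ _x in s, e (b * Tr w ^ k) = ((q:ℝ) ^ 3) • e (b * Tr w ^ k) := by
    rw [setIntegral_const, measureReal_def, hvol]
  rw [← hconst, ← integral_sub (integrableOn_F_Ioc b k _ _) (integrableOn_const (vol_box_lt_top _ _).ne)]
  have hbound : ∀ x ∈ s, ‖e (b * Tr x ^ k) - e (b * Tr w ^ k)‖ ≤
      3 * ((2 * Real.pi * |b| * k * (3 * R ^ 3) ^ (k - 1) * (3 * R ^ 2)) * q) := by
    intro x hx
    apply lip3 b R q k hq0.le
    · intro i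
      have h1 := hx i (Set.mem_univ i)
      simp only [Set.mem_Ioc] at h1
      have h2 : (0:ℝ) ≤ (q:ℝ) * y i := by positivity
      exact ⟨by linarith, by linarith [hbox i]⟩
    · intro i
      have h1 := hw i
      simp only [Set.mem_Icc] at h1
      have h2 : (0:ℝ) ≤ (q:ℝ) * y i := by positivity
      exact ⟨by linarith [h1.1], by linarith [h1.2, hbox i]⟩
    · intro i
      have h1 := hx i (Set.mem_univ i)
      have h2 := hw i
      simp only [Set.mem_Ioc] at h1
      simp only [Set.mem_Icc] at h2
      rw [abs_le]
      constructor <;> [linarith [h1.1, h2.2]; linarith [h1.2, h2.1]]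
  have := norm_setIntegral_le_of_norm_le_const (μ := volume)
    (vol_box_lt_top ((fun i => (q:ℝ) * y i)) (fun i => (q:ℝ) * y i + q)) hbound
  refine this.trans ?_
  rw [measureReal_def, hvol]
  ring_nf
  exact le_refl _

lemma decomp (g : (Fin 3 → ℕ) → ℂ) (q P' : ℕ) (hq : 1 ≤ q) (hqP : q ≤ P') :
    ∑ x ∈ Fintype.piFinset (fun _ : Fin 3 => Finset.Icc 1 P'), g x
      = ∑ r ∈ Fintype.piFinset (fun _ : Fin 3 => Finset.Icc 1 q),
          ∑ y ∈ Fintype.piFinset (fun i : Fin 3 => Finset.range ((P' - r i) / q + 1)),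
            g (fun i => r i + q * y i) := by
  rw [← Finset.sum_sigma (Fintype.piFinset (fun _ : Fin 3 => Finset.Icc 1 q))
    (fun r => Fintype.piFinset (fun i : Fin 3 => Finset.range ((P' - r i) / q + 1)))
    (fun p => g (fun i => p.1 i + q * p.2 i))]
  apply Finset.sum_nbij' (i := fun x => (⟨fun i => (x i - 1) % q + 1, fun i => (x i - 1) / q⟩ :
      Σ _r : Fin 3 → ℕ, (Fin 3 → ℕ))) (j := fun p => fun i => p.1 i + q * p.2 i)
  · intro x hx
    simp only [Fintype.mem_piFinset, Finset.mem_Icc] at hx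
    simp only [Finset.mem_sigma, Fintype.mem_piFinset, Finset.mem_Icc, Finset.mem_range]
    constructor
    · intro i
      have := Nat.mod_lt (x i - 1) (show 0 < q by omega)
      omega
    · intro i
      rw [Nat.lt_succ_iff, Nat.le_div_iff_mul_le (show 0 < q by omega)]
      have h1 := Nat.div_add_mod (x i - 1) q
      have h2 := Nat.mod_lt (x i - 1) (show 0 < q by omega)
      rw [mul_comm]
      set A := q * ((x i - 1) / q) with hA
      have h3 := (hx i).1
      have h4 := (hx i).2
      omega
  · intro p hp
    simp only [Finset.mem_sigma, Fintype.mem_piFinset, Finset.mem_Icc, Finset.mem_range] at hp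
    simp only [Fintype.mem_piFinset, Finset.mem_Icc]
    intro i
    have h1 := (hp.1 i)
    have h2 := hp.2 i
    rw [Nat.lt_succ_iff, Nat.le_div_iff_mul_le (show 0 < q by omega)] at h2
    constructor
    · omega
    · have : q * p.2 i ≤ P' - p.1 i := by rw [mul_comm]; exact h2
      omega
  · intro x hx
    simp only [Fintype.mem_piFinset, Finset.mem_Icc] at hx
    funext i
    show ((x i - 1) % q + 1) + q * ((x i - 1) / q) = x i
    have h1 := Nat.div_add_mod (x i - 1) q
    have h3 := (hx i).1
    set A := q * ((x i - 1) / q) with hA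
    omega
  · intro p hp
    simp only [Finset.mem_sigma, Fintype.mem_piFinset, Finset.mem_Icc, Finset.mem_range] at hp
    have hcomp : ∀ i, ((fun i => p.1 i + q * p.2 i) i - 1) % q + 1 = p.1 i ∧
        ((fun i => p.1 i + q * p.2 i) i - 1) / q = p.2 i := by
      intro i
      have h1 := (hp.1 i)
      have heq : p.1 i + q * p.2 i - 1 = (p.1 i - 1) + p.2 i * q := by
        rw [mul_comm]; omega
      constructor
      · rw [heq, Nat.add_mul_mod_self_right, Nat.mod_eq_of_lt (by omega)]
        omega
      · rw [heq, Nat.add_mul_div_right _ _ (show 0 < q by omega),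
          Nat.div_eq_of_lt (by omega)]
        omega
    apply Sigma.ext
    · funext i; exact (hcomp i).1
    · apply heq_of_eq; funext i; exact (hcomp i).2
  · intro x hx
    simp only
    congr 1
    funext i
    have h1 := Nat.div_add_mod (x i - 1) q
    simp only [Fintype.mem_piFinset, Finset.mem_Icc] at hx
    have h3 := (hx i).1
    set A := q * ((x i - 1) / q) with hA
    omega

lemma TnTr (x : Fin 3 → ℕ) : ((Tn x : ℕ) : ℝ) = Tr (fun i => (x i : ℝ)) := by
  simp [Tn, Tr]

lemma key_pt (k q : ℕ) (hq : 1 ≤ q) (a : ℤ) (α : ℝ) (r y : Fin 3 → ℕ) :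
    e (α * ((Tn (fun i => r i + q * y i) : ℕ) : ℝ) ^ k)
      = e (((a * (Tn r : ℤ) ^ k : ℤ) : ℝ) / q)
        * e ((α - (a : ℝ) / q) * ((Tn (fun i => r i + q * y i) : ℕ) : ℝ) ^ k) := by
  set x : Fin 3 → ℕ := fun i => r i + q * y i with hx
  have hcong : ((Tn x : ℤ)) ≡ (Tn r : ℤ) [ZMOD (q : ℤ)] := by
    have hc : ∀ i, ((x i : ℤ)) ≡ (r i : ℤ) [ZMOD (q : ℤ)] := by
      intro i
      have hd : ((x i : ℤ)) - (r i : ℤ) = q * y i := by simp only [hx]; push_cast; ring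
      exact Int.ModEq.symm (Int.modEq_iff_dvd.mpr ⟨y i, hd⟩)
    have h0 := hc 0; have h1 := hc 1; have h2 := hc 2
    show ((Tn x : ℤ)) ≡ (Tn r : ℤ) [ZMOD (q : ℤ)]
    have : (Tn x : ℤ) = (x 0 : ℤ) ^ 3 + (x 1 : ℤ) ^ 3 + (x 2 : ℤ) ^ 3 := by push_cast [Tn]; ring
    rw [this]
    have : (Tn r : ℤ) = (r 0 : ℤ) ^ 3 + (r 1 : ℤ) ^ 3 + (r 2 : ℤ) ^ 3 := by push_cast [Tn]; ring
    rw [this]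
    exact ((h0.pow 3).add (h1.pow 3)).add (h2.pow 3)
  have hdvd : (q : ℤ) ∣ (a * (Tn x : ℤ) ^ k - a * (Tn r : ℤ) ^ k) :=
    Int.ModEq.dvd (((hcong.pow k).mul_left a).symm)
  obtain ⟨m, hm⟩ := hdvd
  have hq0 : (q : ℝ) ≠ 0 := by positivity
  have hre : (a : ℝ) * ((Tn x : ℕ) : ℝ) ^ k = (a : ℝ) * ((Tn r : ℕ) : ℝ) ^ k + q * m := by
    have : (a * (Tn x : ℤ) ^ k : ℤ) = (a * (Tn r : ℤ) ^ k + q * m : ℤ) := by linarith [hm]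
    exact_mod_cast this
  have harg : α * ((Tn x : ℕ) : ℝ) ^ k
      = ((a * (Tn r : ℤ) ^ k : ℤ) : ℝ) / q + (((α - (a : ℝ) / q) * ((Tn x : ℕ) : ℝ) ^ k) + m) := by
    push_cast
    field_simp
    linarith [hre]
  rw [harg, e_add, e_add, e_int, mul_one]

lemma key_r (b : ℝ) (k q P' : ℕ) (P : ℝ) (hq : 1 ≤ q) (hqP : (q:ℝ) ≤ P)
    (hP'le : (P':ℝ) ≤ P) (hP'ge : P ≤ (P':ℝ) + 1) (hqP' : q ≤ P')
    (r : Fin 3 → ℕ) (hr : ∀ i, 1 ≤ r i ∧ r i ≤ q) :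
    ‖(∑ y ∈ Fintype.piFinset (fun i : Fin 3 => Finset.range ((P' - r i) / q + 1)),
          e (b * ((Tn (fun i => r i + q * y i) : ℕ) : ℝ) ^ k))
        - ((q:ℂ) ^ 3)⁻¹ * (∫ x in Set.univ.pi fun _ : Fin 3 => Icc (0:ℝ) P, e (b * Tr x ^ k))‖
      ≤ ((q:ℝ) ^ 3)⁻¹ *
          ((2*P) ^ 3 * (3 * ((2 * Real.pi * |b| * k * (3 * (2*P) ^ 3) ^ (k-1) * (3 * (2*P) ^ 2)) * q))
            + 3 * ((2*q) * (2*P) ^ 2)) := by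
  have hq0 : (0:ℝ) < q := by exact_mod_cast hq
  have hq0' : 0 < q := hq
  have hP0 : (0:ℝ) < P := lt_of_lt_of_le hq0 hqP
  set L : ℝ := 2 * Real.pi * |b| * k * (3 * (2*P) ^ 3) ^ (k-1) * (3 * (2*P) ^ 2) with hL
  set Y : Fin 3 → ℕ := fun i => (P' - r i) / q with hY
  have hrP' : ∀ i, r i ≤ P' := fun i => le_trans (hr i).2 hqP'
  have hcastsub : ∀ i, ((P' - r i : ℕ) : ℝ) = (P' : ℝ) - r i :=
    fun i => by rw [Nat.cast_sub (hrP' i)]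
  have hupN : ∀ i, q * (Y i + 1) ≤ P' - r i + q := by
    intro i
    have h1 : Y i * q ≤ P' - r i := Nat.div_mul_le_self _ _
    have h2 : q * (Y i + 1) = Y i * q + q := by ring
    omega
  have hloN : ∀ i, P' - r i < q * (Y i + 1) := by
    intro i
    have h2 := Nat.div_add_mod (P' - r i) q
    have h3 := Nat.mod_lt (P' - r i) hq0'
    have h4 : q * (Y i + 1) = q * ((P' - r i) / q) + q := by rw [hY]; ring
    rw [h4]
    set A := q * ((P' - r i) / q) with hA
    omega
  have hA1 : ∀ i, (q:ℝ) * ((Y i : ℝ) + 1) ≤ 2 * P := by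
    intro i
    have h1 : ((q * (Y i + 1) : ℕ) : ℝ) ≤ ((P' - r i + q : ℕ) : ℝ) := by
      exact_mod_cast hupN i
    push_cast [Nat.cast_sub (hrP' i)] at h1
    have h5 : (1:ℝ) ≤ r i := by exact_mod_cast (hr i).1
    push_cast
    linarith [hP'le, hqP]
  have hA0 : ∀ i, 0 ≤ (q:ℝ) * ((Y i : ℝ) + 1) := by
    intro i; positivity
  have hA2 : ∀ i, |(q:ℝ) * ((Y i : ℝ) + 1) - P| ≤ 2 * q := by
    intro i
    have h1 : ((P' - r i : ℕ) : ℝ) < ((q * (Y i + 1) : ℕ) : ℝ) := by exact_mod_cast hloN i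
    have h2 : ((q * (Y i + 1) : ℕ) : ℝ) ≤ ((P' - r i + q : ℕ) : ℝ) := by exact_mod_cast hupN i
    push_cast [Nat.cast_sub (hrP' i)] at h1 h2 ⊢
    have h5 : (1:ℝ) ≤ r i := by exact_mod_cast (hr i).1
    have h6 : (r i : ℝ) ≤ q := by exact_mod_cast (hr i).2
    rw [abs_le]
    constructor <;> linarith [hP'le, hP'ge]
  -- rewrite Icc integral as Ioc integral
  have hIccIoc : (∫ x in Set.univ.pi fun _ : Fin 3 => Icc (0:ℝ) P, e (b * Tr x ^ k))
      = ∫ x in Set.univ.pi fun _ : Fin 3 => Ioc (0:ℝ) P, e (b * Tr x ^ k) := by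
    apply (setIntegral_congr_set _).symm
    have h := MeasureTheory.Measure.pi_Ioc_ae_eq_pi_Icc
      (μ := fun _ : Fin 3 => (volume : Measure ℝ)) (s := Set.univ)
      (f := fun _ => (0:ℝ)) (g := fun _ => P)
    rw [← MeasureTheory.volume_pi] at h
    exact h
  set W : ℂ := ∑ y ∈ Fintype.piFinset (fun i : Fin 3 => Finset.range (Y i + 1)),
      e (b * ((Tn (fun i => r i + q * y i) : ℕ) : ℝ) ^ k) with hW
  have hpart := box_partition b k q hq Y
  have key0 : ‖((q:ℂ) ^ 3) * W
      - ∫ x in Set.univ.pi fun i => Ioc (0:ℝ) ((q : ℝ) * ((Y i : ℝ) + 1)), e (b * Tr x ^ k)‖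
      ≤ (2*P) ^ 3 * (3 * (L * q)) := by
    rw [hpart, hW, Finset.mul_sum, ← Finset.sum_sub_distrib]
    refine (norm_sum_le _ _).trans ?_
    have hterm : ∀ y ∈ Fintype.piFinset (fun i : Fin 3 => Finset.range (Y i + 1)),
        ‖(q:ℂ) ^ 3 * e (b * ((Tn (fun i => r i + q * y i) : ℕ) : ℝ) ^ k)
          - ∫ x in Set.univ.pi fun i => Ioc ((q:ℝ) * y i) ((q:ℝ) * y i + q), e (b * Tr x ^ k)‖
          ≤ (q:ℝ) ^ 3 * (3 * (L * q)) := by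
      intro y hy
      simp only [Fintype.mem_piFinset, Finset.mem_range, Nat.lt_succ_iff] at hy
      set w : Fin 3 → ℝ := fun i => ((r i + q * y i : ℕ) : ℝ) with hw
      have hTnw : e (b * ((Tn (fun i => r i + q * y i) : ℕ) : ℝ) ^ k) = e (b * Tr w ^ k) := by
        rw [TnTr]
      have hsmul : (q:ℂ) ^ 3 * e (b * Tr w ^ k) = ((q:ℝ) ^ 3) • e (b * Tr w ^ k) := by
        rw [Complex.real_smul]; push_cast; ring
      rw [hTnw, hsmul, norm_sub_rev]
      apply cube_est b k (2*P) q hq y w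
      · intro i
        have h5 : (1:ℝ) ≤ r i := by exact_mod_cast (hr i).1
        have h6 : (r i : ℝ) ≤ q := by exact_mod_cast (hr i).2
        constructor
        · show (q:ℝ) * y i ≤ w i
          rw [hw]; push_cast; linarith
        · show w i ≤ (q:ℝ) * y i + q
          rw [hw]; push_cast; linarith
      · intro i
        have h7 : ((y i : ℝ)) + 1 ≤ (Y i : ℝ) + 1 := by
          have := hy i; exact_mod_cast Nat.succ_le_succ this
        calc (q:ℝ) * y i + q = q * ((y i : ℝ) + 1) := by ring
          _ ≤ q * ((Y i : ℝ) + 1) := by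
              apply mul_le_mul_of_nonneg_left h7 hq0.le
          _ ≤ 2 * P := hA1 i
    refine (Finset.sum_le_sum hterm).trans ?_
    rw [Finset.sum_const, nsmul_eq_mul]
    have hcard : ((Fintype.piFinset (fun i : Fin 3 => Finset.range (Y i + 1))).card : ℝ)
        = ∏ i : Fin 3, ((Y i : ℝ) + 1) := by
      rw [Fintype.card_piFinset]
      push_cast
      exact Finset.prod_congr rfl fun i _ => by simp [Finset.card_range]
    rw [hcard]
    have hLq0 : 0 ≤ 3 * (L * q) := by
      have h1 : (0:ℝ) ≤ (3 * (2*P) ^ 3) ^ (k - 1) := pow_nonneg (by positivity) _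
      have h2 : 0 ≤ L := by
        rw [hL]
        have h3 : (0:ℝ) ≤ 2 * Real.pi := by positivity
        exact mul_nonneg (mul_nonneg (mul_nonneg (mul_nonneg h3 (abs_nonneg b)) (Nat.cast_nonneg k)) h1) (by positivity)
      positivity
    calc (∏ i : Fin 3, ((Y i : ℝ) + 1)) * ((q:ℝ) ^ 3 * (3 * (L * q)))
        = (∏ i : Fin 3, (q:ℝ) * ((Y i : ℝ) + 1)) * (3 * (L * q)) := by
          rw [Finset.prod_mul_distrib]
          simp [Finset.prod_const]
          ring
      _ ≤ (2*P) ^ 3 * (3 * (L * q)) := by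
          apply mul_le_mul_of_nonneg_right _ hLq0
          calc (∏ i : Fin 3, (q:ℝ) * ((Y i : ℝ) + 1)) ≤ ∏ _i : Fin 3, (2*P) :=
              Finset.prod_le_prod (fun i _ => hA0 i) (fun i _ => hA1 i)
            _ = (2*P) ^ 3 := by rw [Finset.prod_const]; norm_num
  have key1 : ‖(∫ x in Set.univ.pi fun i => Ioc (0:ℝ) ((q : ℝ) * ((Y i : ℝ) + 1)), e (b * Tr x ^ k))
      - ∫ x in Set.univ.pi fun _ : Fin 3 => Ioc (0:ℝ) P, e (b * Tr x ^ k)‖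
      ≤ 3 * ((2*q) * (2*P) ^ 2) := by
    exact box_compare b k (2*P) (fun i => (q:ℝ) * ((Y i : ℝ) + 1)) (fun _ => P) (2*q)
      (fun i => ⟨hA0 i, hA1 i⟩) (fun _ => ⟨hP0.le, by linarith⟩) hA2
  have hq3 : ((q:ℂ) ^ 3) ≠ 0 := by
    apply pow_ne_zero
    exact_mod_cast Nat.cast_ne_zero.mpr (by omega)
  have hfactor : W - ((q:ℂ) ^ 3)⁻¹ * (∫ x in Set.univ.pi fun _ : Fin 3 => Icc (0:ℝ) P, e (b * Tr x ^ k))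
      = ((q:ℂ) ^ 3)⁻¹ * (((q:ℂ) ^ 3) * W - ∫ x in Set.univ.pi fun _ : Fin 3 => Ioc (0:ℝ) P, e (b * Tr x ^ k)) := by
    rw [hIccIoc]
    rw [mul_sub, ← mul_assoc, inv_mul_cancel₀ hq3, one_mul]
  rw [hfactor, norm_mul]
  have hnormq : ‖((q:ℂ) ^ 3)⁻¹‖ = ((q:ℝ) ^ 3)⁻¹ := by
    rw [norm_inv, norm_pow, Complex.norm_natCast]
  rw [hnormq]
  apply mul_le_mul_of_nonneg_left _ (by positivity)
  calc ‖((q:ℂ) ^ 3) * W - ∫ x in Set.univ.pi fun _ : Fin 3 => Ioc (0:ℝ) P, e (b * Tr x ^ k)‖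
      ≤ ‖((q:ℂ) ^ 3) * W
          - ∫ x in Set.univ.pi fun i => Ioc (0:ℝ) ((q : ℝ) * ((Y i : ℝ) + 1)), e (b * Tr x ^ k)‖
        + ‖(∫ x in Set.univ.pi fun i => Ioc (0:ℝ) ((q : ℝ) * ((Y i : ℝ) + 1)), e (b * Tr x ^ k))
          - ∫ x in Set.univ.pi fun _ : Fin 3 => Ioc (0:ℝ) P, e (b * Tr x ^ k)‖ :=
        norm_sub_le_norm_sub_add_norm_sub _ _ _
    _ ≤ (2*P) ^ 3 * (3 * (L * q)) + 3 * ((2*q) * (2*P) ^ 2) := add_le_add key0 key1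

end AuxStatement11

/-- Major arc approximation of `f(α)` by `q^{-3} S(q,a) v(β)`. -/
theorem statement11 (k : ℕ) (hk : 2 ≤ k) :
    ∃ C > (0 : ℝ), ∃ N : ℕ, ∀ n : ℕ, N ≤ n → ∀ a : ℤ, ∀ q : ℕ, 1 ≤ q →
      Int.gcd a q = 1 → (q : ℝ) < PP k n → ∀ α ∈ Set.Ico (0 : ℝ) 1,
        ‖fexp k n α - ((q : ℂ) ^ 3)⁻¹ * Sqa k q a * vint k n (α - (a : ℝ) / q)‖
          ≤ C * PP k n ^ 2 * q * (1 + n * |α - (a : ℝ) / q|) := by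
  refine ⟨(k : ℝ) * 24 ^ (k + 2), by positivity, 1, ?_⟩
  intro n hn a q hq hgcd hqP α hα
  set β : ℝ := α - (a : ℝ) / q with hβ
  set P : ℝ := PP k n with hP
  set P' : ℕ := ⌊P⌋₊ with hP'
  have hq0 : (0:ℝ) < q := by exact_mod_cast hq
  have hPq : (q:ℝ) ≤ P := hqP.le
  have hP0 : (0:ℝ) < P := lt_of_lt_of_le hq0 hPq
  have hP'le : (P':ℝ) ≤ P := Nat.floor_le hP0.le
  have hP'ge : P ≤ (P':ℝ) + 1 := (Nat.lt_floor_add_one P).le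
  have hqP' : q ≤ P' := Nat.le_floor hqP.le
  have hk0 : (3 * k : ℝ) ≠ 0 := by positivity
  have hPn : P ^ (3 * k) = (n : ℝ) := by
    rw [hP, PP, ← Real.rpow_natCast ((n:ℝ) ^ ((1:ℝ) / (3 * k))) (3 * k),
      ← Real.rpow_mul (Nat.cast_nonneg n)]
    rw [show (1:ℝ) / (3 * k) * ((3 * k : ℕ) : ℝ) = 1 by push_cast; field_simp]
    exact Real.rpow_one _
  -- step 1: decomposition of fexp
  have h1 : fexp k n α
      = ∑ r ∈ Fintype.piFinset (fun _ : Fin 3 => Finset.Icc 1 q),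
          e (((a * (Tn r : ℤ) ^ k : ℤ) : ℝ) / q) *
            ∑ y ∈ Fintype.piFinset (fun i : Fin 3 => Finset.range ((P' - r i) / q + 1)),
              e (β * ((Tn (fun i => r i + q * y i) : ℕ) : ℝ) ^ k) := by
    rw [fexp, decomp (fun x => e (α * ((Tn x : ℕ) : ℝ) ^ k)) q P' hq hqP']
    refine Finset.sum_congr rfl fun r _ => ?_
    rw [Finset.mul_sum]
    exact Finset.sum_congr rfl fun y _ => key_pt k q hq a α r y
  -- step 2: the main term
  have h2 : ((q : ℂ) ^ 3)⁻¹ * Sqa k q a * vint k n β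
      = ∑ r ∈ Fintype.piFinset (fun _ : Fin 3 => Finset.Icc 1 q),
          e (((a * (Tn r : ℤ) ^ k : ℤ) : ℝ) / q) * (((q : ℂ) ^ 3)⁻¹ * vint k n β) := by
    rw [Sqa, ← Finset.sum_mul]
    ring
  have h3 : fexp k n α - ((q : ℂ) ^ 3)⁻¹ * Sqa k q a * vint k n β
      = ∑ r ∈ Fintype.piFinset (fun _ : Fin 3 => Finset.Icc 1 q),
          e (((a * (Tn r : ℤ) ^ k : ℤ) : ℝ) / q) *
            ((∑ y ∈ Fintype.piFinset (fun i : Fin 3 => Finset.range ((P' - r i) / q + 1)),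
              e (β * ((Tn (fun i => r i + q * y i) : ℕ) : ℝ) ^ k))
              - ((q : ℂ) ^ 3)⁻¹ * vint k n β) := by
    rw [h1, h2, ← Finset.sum_sub_distrib]
    exact Finset.sum_congr rfl fun r _ => by ring
  set K : ℝ := ((q:ℝ) ^ 3)⁻¹ *
      ((2*P) ^ 3 * (3 * ((2 * Real.pi * |β| * k * (3 * (2*P) ^ 3) ^ (k-1) * (3 * (2*P) ^ 2)) * q))
        + 3 * ((2*q) * (2*P) ^ 2)) with hK
  have h4 : ‖fexp k n α - ((q : ℂ) ^ 3)⁻¹ * Sqa k q a * vint k n β‖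
      ≤ (q:ℝ) ^ 3 * K := by
    rw [h3]
    refine (norm_sum_le _ _).trans ?_
    have hbd : ∀ r ∈ Fintype.piFinset (fun _ : Fin 3 => Finset.Icc 1 q),
        ‖e (((a * (Tn r : ℤ) ^ k : ℤ) : ℝ) / q) *
            ((∑ y ∈ Fintype.piFinset (fun i : Fin 3 => Finset.range ((P' - r i) / q + 1)),
              e (β * ((Tn (fun i => r i + q * y i) : ℕ) : ℝ) ^ k))
              - ((q : ℂ) ^ 3)⁻¹ * vint k n β)‖ ≤ K := by
      intro r hr
      rw [norm_mul, norm_e, one_mul]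
      simp only [Fintype.mem_piFinset, Finset.mem_Icc] at hr
      have := key_r β k q P' P hq hPq hP'le hP'ge hqP' r hr
      rw [vint, ← hP]
      exact this
    refine (Finset.sum_le_sum hbd).trans ?_
    rw [Finset.sum_const, nsmul_eq_mul]
    have hcard : ((Fintype.piFinset (fun _ : Fin 3 => Finset.Icc 1 q)).card : ℝ) = (q:ℝ) ^ 3 := by
      rw [Fintype.card_piFinset]
      simp [Nat.card_Icc]
    rw [hcard]
  refine h4.trans ?_
  -- numeric endgame
  have hq3 : ((q:ℝ) ^ 3) ≠ 0 := by positivity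
  have hKval : (q:ℝ) ^ 3 * K
      = (2*P) ^ 3 * (3 * ((2 * Real.pi * |β| * k * (3 * (2*P) ^ 3) ^ (k-1) * (3 * (2*P) ^ 2)) * q))
        + 3 * ((2*q) * (2*P) ^ 2) := by
    rw [hK]; field_simp
  rw [hKval]
  have hexp1 : (3 * (2*P) ^ 3) ^ (k-1) = 24 ^ (k-1) * P ^ (3*k-3) := by
    rw [show 3 * (2*P) ^ 3 = 24 * P ^ 3 by ring, mul_pow, ← pow_mul]
    congr 2
    omega
  have hexp2 : P ^ (3*k-3) * P ^ 5 = (n:ℝ) * P ^ 2 := by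
    rw [← pow_add, show 3*k - 3 + 5 = 3*k + 2 by omega, pow_add, hPn]
  have hmain : (2*P) ^ 3 * (3 * ((2 * Real.pi * |β| * k * (3 * (2*P) ^ 3) ^ (k-1) * (3 * (2*P) ^ 2)) * q))
      = 24 ^ (k+1) * Real.pi * k * |β| * q * ((n:ℝ) * P ^ 2) := by
    rw [hexp1, ← hexp2,
      show (24:ℝ) ^ (k+1) = 24 ^ (k-1) * 24 ^ 2 by rw [← pow_add]; congr 1; omega]
    ring
  rw [hmain]
  have hpow24 : (24:ℝ) ^ (k-1) ≤ 24 ^ (k+2) := pow_le_pow_right₀ (by norm_num) (by omega)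
  have hC1 : 24 ^ (k+1) * Real.pi * k * |β| * q * ((n:ℝ) * P ^ 2)
      ≤ ((k:ℝ) * 24 ^ (k+2)) * P ^ 2 * q * ((n:ℝ) * |β|) := by
    have hpi : Real.pi ≤ 24 := by linarith [Real.pi_le_four]
    have h24 : (24:ℝ) ^ (k+1) * Real.pi ≤ 24 ^ (k+2) := by
      calc (24:ℝ) ^ (k+1) * Real.pi ≤ 24 ^ (k+1) * 24 :=
            mul_le_mul_of_nonneg_left hpi (by positivity)
        _ = 24 ^ (k+2) := by rw [← pow_succ]
    calc 24 ^ (k+1) * Real.pi * k * |β| * q * ((n:ℝ) * P ^ 2)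
        ≤ 24 ^ (k+2) * k * |β| * q * ((n:ℝ) * P ^ 2) := by
          apply mul_le_mul_of_nonneg_right _ (by positivity)
          apply mul_le_mul_of_nonneg_right _ (by positivity)
          apply mul_le_mul_of_nonneg_right _ (abs_nonneg β)
          exact mul_le_mul_of_nonneg_right h24 (Nat.cast_nonneg k)
      _ = ((k:ℝ) * 24 ^ (k+2)) * P ^ 2 * q * ((n:ℝ) * |β|) := by ring
  have hC2 : 3 * ((2*(q:ℝ)) * (2*P) ^ 2) ≤ ((k:ℝ) * 24 ^ (k+2)) * P ^ 2 * q := by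
    have h1 : 3 * ((2*(q:ℝ)) * (2*P) ^ 2) = 24 * P ^ 2 * q := by ring
    rw [h1]
    have h2 : (24:ℝ) ≤ (k:ℝ) * 24 ^ (k+2) := by
      have h3 : (2:ℝ) ≤ k := by exact_mod_cast hk
      have h4 : (24:ℝ) ≤ 24 ^ (k+2) := by
        calc (24:ℝ) = 24 ^ 1 := (pow_one 24).symm
          _ ≤ 24 ^ (k+2) := pow_le_pow_right₀ (by norm_num) (by omega)
      nlinarith
    apply mul_le_mul_of_nonneg_right _ hq0.le
    exact mul_le_mul_of_nonneg_right h2 (by positivity)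
  calc 24 ^ (k+1) * Real.pi * k * |β| * q * ((n:ℝ) * P ^ 2) + 3 * ((2*(q:ℝ)) * (2*P) ^ 2)
      ≤ ((k:ℝ) * 24 ^ (k+2)) * P ^ 2 * q * ((n:ℝ) * |β|)
        + ((k:ℝ) * 24 ^ (k+2)) * P ^ 2 * q := add_le_add hC1 hC2
    _ = ((k:ℝ) * 24 ^ (k+2)) * P ^ 2 * q * (1 + (n:ℝ) * |β|) := by ring

end
end
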